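/- arXiv:0902.1042 — 4 statements merged into one kernel-verified Lean document; each statement's English description precedes it below -/
import Mathlib

section
/- Every ω-regular language over a finite alphabet Σ, i.e., every language recognized by a deterministic Muller automaton, is recognized by a deterministic max-automaton. -/
namespace MaxReg

/-! ### Counter operations and boolean combinations -/

inductive CounterOp (C : Type) where
  | inc (c : C)
  | reset (c : C)
  | output (c : C)
  | maxOp (c d : C)

def applyOp {C : Type} [DecidableEq C] (v : C → ℕ) :
    CounterOp C → (C → ℕ) × Option (C × ℕ)
  | .inc c => (Function.update v c (v c + 1), none)
  | .reset c => (Function.update v c 0, none)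
  | .output c => (v, some (c, v c))
  | .maxOp c d => (Function.update v c (max (v c) (v d)), none)

def applyOps {C : Type} [DecidableEq C] :
    List (CounterOp C) → (C → ℕ) → (C → ℕ) × List (C × ℕ)
  | [], v => (v, [])
  | op :: ops, v =>
      let p := applyOp v op
      let r := applyOps ops p.1
      (r.1, p.2.toList ++ r.2)

/-- Boolean combinations with atoms in `σ` (used for acceptance conditions:
the atom `c` stands for "the sequence of values output on counter `c` is bounded"). -/
inductive BC (σ : Type) where
  | tt
  | atom (a : σ)
  | nt (φ : BC σ)
  | an (φ ψ : BC σ)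

def BC.eval {σ : Type} (f : σ → Prop) : BC σ → Prop
  | .tt => True
  | .atom a => f a
  | .nt φ => ¬ φ.eval f
  | .an φ ψ => φ.eval f ∧ ψ.eval f

/-! ### Deterministic max-automata -/

structure MaxAutomaton (α : Type) where
  Q : Type
  C : Type
  [finQ : Fintype Q]
  [finC : Fintype C]
  [decC : DecidableEq C]
  init : Q
  δ : Q → α → Q × List (CounterOp C)
  acc : BC C

attribute [instance] MaxAutomaton.finQ MaxAutomaton.finC MaxAutomaton.decC

namespace MaxAutomaton

variable {α : Type} (A : MaxAutomaton α)

/-- The state at position `n` of the unique run on `w`, started in state `q`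
(at position `0`). -/
def runFrom (q : A.Q) (w : ℕ → α) : ℕ → A.Q
  | 0 => q
  | n + 1 => (A.δ (runFrom q w n) (w n)).1

/-- Counter values before reading the letter at position `n` (all counters start at `0`). -/
def valsFrom (q : A.Q) (w : ℕ → α) : ℕ → (A.C → ℕ)
  | 0 => fun _ => 0
  | n + 1 => (applyOps (A.δ (A.runFrom q w n) (w n)).2 (valsFrom q w n)).1

/-- The (counter, value) pairs output while reading the letter at position `n`. -/
def outsFrom (q : A.Q) (w : ℕ → α) (n : ℕ) : List (A.C × ℕ) :=
  (applyOps (A.δ (A.runFrom q w n) (w n)).2 (A.valsFrom q w n)).2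

/-- "The sequence `ρ_c` of values output on counter `c` is bounded." -/
def BoundedFrom (q : A.Q) (w : ℕ → α) (c : A.C) : Prop :=
  ∃ B, ∀ n, ∀ p ∈ A.outsFrom q w n, p.1 = c → p.2 ≤ B

def AcceptsFrom (q : A.Q) (w : ℕ → α) : Prop :=
  A.acc.eval (A.BoundedFrom q w)

def Accepts (w : ℕ → α) : Prop := A.AcceptsFrom A.init w

def Lang : Set (ℕ → α) := { w | A.Accepts w }

/-- One step on a configuration (state, counter valuation), for reading finite words. -/
def stepList (p : A.Q × (A.C → ℕ)) (a : α) : A.Q × (A.C → ℕ) :=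
  ((A.δ p.1 a).1, (applyOps (A.δ p.1 a).2 p.2).1)

/-- Configuration (state, counter valuation) reached after reading a finite word
from the initial state with all counters `0`. -/
def readConfig (l : List α) : A.Q × (A.C → ℕ) :=
  l.foldl A.stepList (A.init, fun _ => 0)

end MaxAutomaton

/-! ### Annotating words with sets -/

/-- `w[X]` : extend each letter of `w` with the bit `1` exactly at the positions in `X`. -/
def withSet {α : Type} (w : ℕ → α) (X : Finset ℕ) : ℕ → α × Bool :=
  fun n => (w n, decide (n ∈ X))

/-- `w[X₁,…,Xₙ]` : extend each letter of `w` with a bit vector. -/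
def withSets {α : Type} {n : ℕ} (w : ℕ → α) (Xs : Fin n → Finset ℕ) :
    ℕ → α × (Fin n → Bool) :=
  fun m => (w m, fun i => decide (m ∈ Xs i))

/-- Annotate a finite word with a set of positions. -/
def encodeList {α : Type} (l : List α) (X : Finset ℕ) : List (α × Bool) :=
  l.zipIdx.map (fun p => (p.1, decide (p.2 ∈ X)))

/-- `UL` : the words `w` such that `w[X] ∈ L` for arbitrarily large finite sets `X`. -/
def UL {α : Type} (L : Set (ℕ → α × Bool)) : Set (ℕ → α) :=
  { w | ∀ n : ℕ, ∃ X : Finset ℕ, n ≤ X.card ∧ withSet w X ∈ L }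

/-- `max(q, l)` : maximal cardinality of a set `X` of positions of `l` such that `A`
reaches state `q` after reading `l[X]` (and `0` if there is no such set). -/
noncomputable def maxReach {α : Type} (A : MaxAutomaton (α × Bool)) (q : A.Q)
    (l : List α) : ℕ :=
  sSup { k | ∃ X : Finset ℕ, (∀ x ∈ X, x < l.length) ∧ X.card = k ∧
    (A.readConfig (encodeList l X)).1 = q }

def suffixFrom {α : Type} (w : ℕ → α) (n : ℕ) : ℕ → α := fun k => w (n + k)

def prefixList {α : Type} (w : ℕ → α) (n : ℕ) : List α := (List.range n).map w

/-! ### WMSO+U and MSO+U formulas -/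

inductive Formula (α : Type) where
  | letter (a : α) (x : ℕ)
  | mem (x X : ℕ)
  | le (x y : ℕ)
  | not (φ : Formula α)
  | and (φ ψ : Formula α)
  | exFO (x : ℕ) (φ : Formula α)
  | exSO (X : ℕ) (φ : Formula α)
  | U (X : ℕ) (φ : Formula α)

/-- Weak semantics: set variables range over finite sets of positions. -/
def Sat {α : Type} (w : ℕ → α) (v1 : ℕ → ℕ) (v2 : ℕ → Finset ℕ) :
    Formula α → Prop
  | .letter a x => w (v1 x) = a
  | .mem x X => v1 x ∈ v2 X
  | .le x y => v1 x ≤ v1 y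
  | .not φ => ¬ Sat w v1 v2 φ
  | .and φ ψ => Sat w v1 v2 φ ∧ Sat w v1 v2 ψ
  | .exFO x φ => ∃ k : ℕ, Sat w (Function.update v1 x k) v2 φ
  | .exSO X φ => ∃ S : Finset ℕ, Sat w v1 (Function.update v2 X S) φ
  | .U X φ => ∀ n : ℕ, ∃ S : Finset ℕ, n ≤ S.card ∧
      Sat w v1 (Function.update v2 X S) φ

/-- Full semantics: set variables range over arbitrary subsets of ℕ; the
unbounding quantifier still speaks about finite sets. -/
def SatFull {α : Type} (w : ℕ → α) (v1 : ℕ → ℕ) (v2 : ℕ → Set ℕ) :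
    Formula α → Prop
  | .letter a x => w (v1 x) = a
  | .mem x X => v1 x ∈ v2 X
  | .le x y => v1 x ≤ v1 y
  | .not φ => ¬ SatFull w v1 v2 φ
  | .and φ ψ => SatFull w v1 v2 φ ∧ SatFull w v1 v2 ψ
  | .exFO x φ => ∃ k : ℕ, SatFull w (Function.update v1 x k) v2 φ
  | .exSO X φ => ∃ S : Set ℕ, SatFull w v1 (Function.update v2 X S) φ
  | .U X φ => ∀ n : ℕ, ∃ S : Finset ℕ, n ≤ S.card ∧
      SatFull w v1 (Function.update v2 X (↑S : Set ℕ)) φ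

def freeFO {α : Type} : Formula α → Finset ℕ
  | .letter _ x => {x}
  | .mem x _ => {x}
  | .le x y => {x, y}
  | .not φ => freeFO φ
  | .and φ ψ => freeFO φ ∪ freeFO ψ
  | .exFO x φ => freeFO φ \ {x}
  | .exSO _ φ => freeFO φ
  | .U _ φ => freeFO φ

def freeSO {α : Type} : Formula α → Finset ℕ
  | .letter _ _ => ∅
  | .mem _ X => {X}
  | .le _ _ => ∅
  | .not φ => freeSO φ
  | .and φ ψ => freeSO φ ∪ freeSO ψ
  | .exFO _ φ => freeSO φ
  | .exSO X φ => freeSO φ \ {X}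
  | .U X φ => freeSO φ \ {X}

def Sentence {α : Type} (φ : Formula α) : Prop :=
  freeFO φ = ∅ ∧ freeSO φ = ∅

/-- `L` is definable by a sentence of WMSO+U. -/
def DefinableW {α : Type} (L : Set (ℕ → α)) : Prop :=
  ∃ φ : Formula α, Sentence φ ∧
    L = { w | Sat w (fun _ => 0) (fun _ => (∅ : Finset ℕ)) φ }

/-- `L` is definable by a sentence of full MSO+U. -/
def DefinableF {α : Type} (L : Set (ℕ → α)) : Prop :=
  ∃ φ : Formula α, Sentence φ ∧
    L = { w | SatFull w (fun _ => 0) (fun _ => (∅ : Set ℕ)) φ }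

/-- `φ` contains no occurrence of the unbounding quantifier. -/
def UFree {α : Type} : Formula α → Prop
  | .letter _ _ => True
  | .mem _ _ => True
  | .le _ _ => True
  | .not φ => UFree φ
  | .and φ ψ => UFree φ ∧ UFree ψ
  | .exFO _ φ => UFree φ
  | .exSO _ φ => UFree φ
  | .U _ _ => False

/-- Boolean combinations of formulas `U X. φ` with `φ` free of the unbounding
quantifier. -/
inductive IsUNormal {α : Type} : Formula α → Prop
  | base (X : ℕ) (φ : Formula α) : UFree φ → IsUNormal (.U X φ)
  | not {φ : Formula α} : IsUNormal φ → IsUNormal (.not φ)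
  | and {φ ψ : Formula α} : IsUNormal φ → IsUNormal ψ →
      IsUNormal (.and φ ψ)

/-! ### Deterministic Muller automata -/

structure MullerAutomaton (α : Type) where
  Q : Type
  [finQ : Fintype Q]
  init : Q
  δ : Q → α → Q
  F : Set (Set Q)

attribute [instance] MullerAutomaton.finQ

namespace MullerAutomaton

variable {α : Type} (M : MullerAutomaton α)

def run (w : ℕ → α) : ℕ → M.Q
  | 0 => M.init
  | n + 1 => M.δ (run w n) (w n)

/-- States occurring infinitely often in the run on `w`. -/
def InfOcc (w : ℕ → α) : Set M.Q :=
  { q | ∀ n : ℕ, ∃ m, n ≤ m ∧ M.run w m = q }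

def Lang : Set (ℕ → α) := { w | M.InfOcc w ∈ M.F }

end MullerAutomaton

/-! ### Partial runs, convergence, spanning sets -/

section PartialRuns

variable {Q α : Type}

/-- State at position `n + k` of the run seeded at configuration `(q, n)`. -/
def runSeed (δ : Q → α → Q) (w : ℕ → α) (q : Q) (n : ℕ) : ℕ → Q
  | 0 => q
  | k + 1 => δ (runSeed δ w q n k) (w (n + k))

/-- The partial run seeded at configuration `(q, n)`. -/
def seeded (δ : Q → α → Q) (w : ℕ → α) (q : Q) (n : ℕ) : ℕ → Option Q :=
  fun m => if _h : n ≤ m then some (runSeed δ w q n (m - n)) else none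

/-- A partial run over `w`: either the nowhere-defined run or a seeded run. -/
def IsPartialRun (δ : Q → α → Q) (w : ℕ → α) (ρ : ℕ → Option Q) : Prop :=
  ρ = (fun _ => none) ∨ ∃ q n, ρ = seeded δ w q n

/-- Two partial runs converge if they agree from some position on. -/
def Converge (ρ₁ ρ₂ : ℕ → Option Q) : Prop :=
  ∃ N : ℕ, ∀ m, N ≤ m → ρ₁ m = ρ₂ m

/-- A set of partial runs spans `w` if every partial run over `w` converges with
some member of the set. -/
def Spans (δ : Q → α → Q) (w : ℕ → α) (S : Set (ℕ → Option Q)) : Prop :=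
  ∀ ρ, IsPartialRun δ w ρ → ∃ ρ' ∈ S, Converge ρ ρ'

end PartialRuns

/-! ### Deterministic letter-to-letter transducers -/

structure Transducer (α β : Type) where
  Q : Type
  [finQ : Fintype Q]
  init : Q
  δ : Q → α → Q
  out : Q → α → β

attribute [instance] Transducer.finQ

namespace Transducer

variable {α β : Type} (T : Transducer α β)

def run (w : ℕ → α) : ℕ → T.Q
  | 0 => T.init
  | n + 1 => T.δ (run w n) (w n)

/-- The function `Σ^ω → Γ^ω` computed by the transducer. -/
def f (w : ℕ → α) : ℕ → β := fun n => T.out (T.run w n) (w n)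

end Transducer

open Classical in
/-- Decode a word over `Q × {0,1}` as a partial run: position `m` is defined (with the
state recorded at `m`) iff all markers from position `m` on are `1`. -/
noncomputable def decode {Q : Type} (u : ℕ → Q × Bool) : ℕ → Option Q :=
  fun m => if (∀ j, m ≤ j → (u j).2 = true) then some (u m).1 else none

/-! ### Guarded max-automata -/

inductive GOp (C α : Type) where
  | inc (c : C)
  | reset (c : C)
  | output (c : C)
  | maxOp (c d : C)
  /-- `if G then output c` : output the value of `c` only if the suffix of the input
  beginning at the next position belongs to `G`. -/
  | goutput (G : Set (ℕ → α)) (c : C)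

open Classical in
noncomputable def applyGOp {C α : Type} [DecidableEq C] (suffix : ℕ → α)
    (v : C → ℕ) : GOp C α → (C → ℕ) × Option (C × ℕ)
  | .inc c => (Function.update v c (v c + 1), none)
  | .reset c => (Function.update v c 0, none)
  | .output c => (v, some (c, v c))
  | .maxOp c d => (Function.update v c (max (v c) (v d)), none)
  | .goutput G c => (v, if suffix ∈ G then some (c, v c) else none)

noncomputable def applyGOps {C α : Type} [DecidableEq C] (suffix : ℕ → α) :
    List (GOp C α) → (C → ℕ) → (C → ℕ) × List (C × ℕ)
  | [], v => (v, [])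
  | op :: ops, v =>
      let p := applyGOp suffix v op
      let r := applyGOps suffix ops p.1
      (r.1, p.2.toList ++ r.2)

def GOp.WF {C α : Type} : GOp C α → Prop
  | .goutput G _ => ∃ A : MaxAutomaton α, A.Lang = G
  | _ => True

structure GuardedMaxAutomaton (α : Type) where
  Q : Type
  C : Type
  [finQ : Fintype Q]
  [finC : Fintype C]
  [decC : DecidableEq C]
  init : Q
  δ : Q → α → Q × List (GOp C α)
  acc : BC C

attribute [instance] GuardedMaxAutomaton.finQ GuardedMaxAutomaton.finC
  GuardedMaxAutomaton.decC

namespace GuardedMaxAutomaton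

variable {α : Type} (B : GuardedMaxAutomaton α)

/-- All guards used by the automaton are languages recognized by deterministic
max-automata. -/
def WF : Prop := ∀ q a, ∀ op ∈ (B.δ q a).2, op.WF

def run (w : ℕ → α) : ℕ → B.Q
  | 0 => B.init
  | n + 1 => (B.δ (run w n) (w n)).1

noncomputable def vals (w : ℕ → α) : ℕ → (B.C → ℕ)
  | 0 => fun _ => 0
  | n + 1 =>
      (applyGOps (suffixFrom w (n + 1)) (B.δ (B.run w n) (w n)).2 (vals w n)).1

noncomputable def outs (w : ℕ → α) (n : ℕ) : List (B.C × ℕ) :=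
  (applyGOps (suffixFrom w (n + 1)) (B.δ (B.run w n) (w n)).2 (B.vals w n)).2

def Bounded (w : ℕ → α) (c : B.C) : Prop :=
  ∃ Bd, ∀ n, ∀ p ∈ B.outs w n, p.1 = c → p.2 ≤ Bd

def Accepts (w : ℕ → α) : Prop := B.acc.eval (B.Bounded w)

def Lang : Set (ℕ → α) := { w | B.Accepts w }

end GuardedMaxAutomaton

/-! ### Nondeterministic max-automata -/

structure NMaxAutomaton (α : Type) where
  Q : Type
  C : Type
  [finQ : Fintype Q]
  [finC : Fintype C]
  [decC : DecidableEq C]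
  init : Q
  δ : Q → α → Set (Q × List (CounterOp C))
  acc : BC C

attribute [instance] NMaxAutomaton.finQ NMaxAutomaton.finC NMaxAutomaton.decC

/-- Counter values along a sequence of counter-operation lists. -/
def nvals {C : Type} [DecidableEq C] (ops : ℕ → List (CounterOp C)) :
    ℕ → (C → ℕ)
  | 0 => fun _ => 0
  | n + 1 => (applyOps (ops n) (nvals ops n)).1

def nouts {C : Type} [DecidableEq C] (ops : ℕ → List (CounterOp C)) (n : ℕ) :
    List (C × ℕ) :=
  (applyOps (ops n) (nvals ops n)).2

namespace NMaxAutomaton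

variable {α : Type} (A : NMaxAutomaton α)

def Accepts (w : ℕ → α) : Prop :=
  ∃ (q : ℕ → A.Q) (ops : ℕ → List (CounterOp A.C)),
    q 0 = A.init ∧
    (∀ n, (q (n + 1), ops n) ∈ A.δ (q n) (w n)) ∧
    A.acc.eval (fun c => ∃ B, ∀ n, ∀ p ∈ nouts ops n, p.1 = c → p.2 ≤ B)

def Lang : Set (ℕ → α) := { w | A.Accepts w }

end NMaxAutomaton

/-! ### The separating language -/

/-- Position of the `k`-th letter `b` in `a^{ns 0} b a^{ns 1} b ⋯` (0-indexed). -/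
def bpos (ns : ℕ → ℕ) (k : ℕ) : ℕ := (∑ i ∈ Finset.range (k + 1), ns i) + k

/-- `L_sep` over the alphabet `{a, b}` (with `a = false`, `b = true`): words
`a^{n₁} b a^{n₂} b ⋯` such that some number appears infinitely often in `n₁, n₂, …`. -/
def Lsep : Set (ℕ → Bool) :=
  { w | ∃ ns : ℕ → ℕ,
      (∀ m, w m = true ↔ ∃ k, bpos ns k = m) ∧
      ∃ v, { i | ns i = v }.Infinite }

/-! ### Topological notions -/

/-- A `Σ₂` set: a countable union of closed sets. -/
def IsSigma2 {X : Type} [TopologicalSpace X] (S : Set X) : Prop :=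
  ∃ F : ℕ → Set X, (∀ n, IsClosed (F n)) ∧ S = ⋃ n, F n

/-- Boolean combinations of `Σ₂` sets. -/
inductive IsBoolCombSigma2 {X : Type} [TopologicalSpace X] : Set X → Prop
  | base {S : Set X} : IsSigma2 S → IsBoolCombSigma2 S
  | compl {S : Set X} : IsBoolCombSigma2 S → IsBoolCombSigma2 Sᶜ
  | inter {S T : Set X} : IsBoolCombSigma2 S → IsBoolCombSigma2 T →
      IsBoolCombSigma2 (S ∩ T)



/-! ### Auxiliary material for the proof -/

section AuxBC

variable {σ : Type}

def BC.orr (φ ψ : BC σ) : BC σ := .nt (.an (.nt φ) (.nt ψ))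

def bigOr : List (BC σ) → BC σ
  | [] => .nt .tt
  | φ :: l => BC.orr φ (bigOr l)

def bigAnd : List (BC σ) → BC σ
  | [] => .tt
  | φ :: l => .an φ (bigAnd l)

lemma eval_orr (f : σ → Prop) (φ ψ : BC σ) :
    (BC.orr φ ψ).eval f ↔ φ.eval f ∨ ψ.eval f := by
  simp [BC.orr, BC.eval]; tauto

lemma eval_bigOr (f : σ → Prop) : ∀ l : List (BC σ),
    (bigOr l).eval f ↔ ∃ φ ∈ l, φ.eval f
  | [] => by simp [bigOr, BC.eval]
  | φ :: l => by simp [bigOr, eval_orr, eval_bigOr f l]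

lemma eval_bigAnd (f : σ → Prop) : ∀ l : List (BC σ),
    (bigAnd l).eval f ↔ ∀ φ ∈ l, φ.eval f
  | [] => by simp [bigAnd, BC.eval]
  | φ :: l => by simp [bigAnd, BC.eval, eval_bigAnd f l]

end AuxBC

section Construction

variable {α : Type} (M : MullerAutomaton α)

open Classical in
noncomputable def exactBC (S : Finset M.Q) : BC M.Q :=
  bigAnd ((Finset.univ : Finset M.Q).toList.map
    (fun q => if q ∈ S then BC.nt (.atom q) else .atom q))

open Classical in
lemma eval_exactBC (f : M.Q → Prop) (S : Finset M.Q) :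
    (exactBC M S).eval f ↔ ∀ q : M.Q, (q ∈ S ↔ ¬ f q) := by
  classical
  rw [exactBC, eval_bigAnd]
  constructor
  · intro h q
    have := h _ (List.mem_map.2 ⟨q, Finset.mem_toList.2 (Finset.mem_univ q), rfl⟩)
    split_ifs at this with hq
    · simp only [BC.eval] at this
      exact ⟨fun _ => this, fun _ => hq⟩
    · simp only [BC.eval] at this
      exact ⟨fun hq2 => absurd hq2 hq, fun hf => absurd this hf⟩
  · intro h φ hφ
    rcases List.mem_map.1 hφ with ⟨q, -, rfl⟩
    split_ifs with hq
    · simpa [BC.eval] using (h q).1 hq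
    · simp only [BC.eval]
      by_contra hf
      exact hq ((h q).2 hf)

open Classical in
noncomputable def mullerAcc : BC M.Q :=
  bigOr (((Finset.univ : Finset (Finset M.Q)).toList.filter
    (fun (S : Finset M.Q) => decide ((S : Set M.Q) ∈ M.F))).map (exactBC M))

open Classical in
noncomputable def toMax : MaxAutomaton α where
  Q := M.Q
  C := M.Q
  finQ := inferInstance
  finC := inferInstance
  decC := Classical.decEq _
  init := M.init
  δ := fun q _a => (M.δ q _a, [.inc q, .output q])
  acc := mullerAcc M

lemma toMax_run (w : ℕ → α) :
    ∀ n, (toMax M).runFrom (toMax M).init w n = M.run w n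
  | 0 => rfl
  | n + 1 => by
      show ((toMax M).δ ((toMax M).runFrom (toMax M).init w n) (w n)).1 = _
      rw [toMax_run w n]
      rfl

open Classical in
noncomputable def cnt (w : ℕ → α) (n : ℕ) (c : M.Q) : ℕ :=
  ((Finset.range n).filter (fun m => M.run w m = c)).card

open Classical in
lemma toMax_vals (w : ℕ → α) :
    ∀ n (c : M.Q), (toMax M).valsFrom (toMax M).init w n c = cnt M w n c
  | 0, c => by simp [MaxAutomaton.valsFrom, cnt]
  | n + 1, c => by
      classical
      have hrun := toMax_run M w n
      show (applyOps ((toMax M).δ ((toMax M).runFrom (toMax M).init w n) (w n)).2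
        ((toMax M).valsFrom (toMax M).init w n)).1 c = _
      rw [hrun]
      show (Function.update ((toMax M).valsFrom (toMax M).init w n) (M.run w n)
        (((toMax M).valsFrom (toMax M).init w n) (M.run w n) + 1)) c = _
      erw [Function.update_apply]
      unfold cnt
      rw [Finset.range_add_one, Finset.filter_insert]
      split_ifs with h1 h2 h2
      · subst h1
        rw [Finset.card_insert_of_notMem (by simp)]
        rw [toMax_vals w n]
        rfl
      · exact absurd h1.symm h2
      · exact absurd h2.symm h1
      · exact toMax_vals w n c

open Classical in
lemma toMax_outs (w : ℕ → α) (n : ℕ) :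
    (toMax M).outsFrom (toMax M).init w n =
      [(M.run w n, cnt M w n (M.run w n) + 1)] := by
  classical
  show (applyOps ((toMax M).δ ((toMax M).runFrom (toMax M).init w n) (w n)).2
    ((toMax M).valsFrom (toMax M).init w n)).2 = _
  rw [toMax_run M w n]
  show [(M.run w n, Function.update ((toMax M).valsFrom (toMax M).init w n)
    (M.run w n) (((toMax M).valsFrom (toMax M).init w n) (M.run w n) + 1)
    (M.run w n))] = _
  erw [Function.update_self, toMax_vals M w n]

lemma cnt_lt_of_gt (w : ℕ → α) {n m : ℕ} (c : M.Q) (hnm : n < m)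
    (hn : M.run w n = c) : cnt M w n c < cnt M w m c := by
  classical
  have hsub : insert n ((Finset.range n).filter (fun k => M.run w k = c)) ⊆
      (Finset.range m).filter (fun k => M.run w k = c) := by
    intro x hx
    rcases Finset.mem_insert.1 hx with rfl | hx
    · exact Finset.mem_filter.2 ⟨Finset.mem_range.2 hnm, hn⟩
    · rcases Finset.mem_filter.1 hx with ⟨hx1, hx2⟩
      exact Finset.mem_filter.2 ⟨Finset.mem_range.2
        (lt_trans (Finset.mem_range.1 hx1) hnm), hx2⟩
  have := Finset.card_le_card hsub
  rwa [Finset.card_insert_of_notMem (by simp)] at this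

lemma infOcc_iff_infinite (w : ℕ → α) (c : M.Q) :
    c ∈ M.InfOcc w ↔ {m | M.run w m = c}.Infinite := by
  constructor
  · intro h
    intro hfin
    obtain ⟨b, hb⟩ := hfin.bddAbove
    obtain ⟨m, hm1, hm2⟩ := h (b + 1)
    exact absurd (hb hm2) (by omega)
  · intro h n
    obtain ⟨m, hm1, hm2⟩ := h.exists_gt n
    exact ⟨m, le_of_lt hm2, hm1⟩

lemma toMax_bounded (w : ℕ → α) (c : M.Q) :
    (toMax M).BoundedFrom (toMax M).init w c ↔ c ∉ M.InfOcc w := by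
  classical
  rw [infOcc_iff_infinite M w c, Set.not_infinite]
  unfold MaxAutomaton.BoundedFrom
  have key : (∃ B, ∀ n, ∀ p ∈ (toMax M).outsFrom (toMax M).init w n,
      p.1 = c → p.2 ≤ B) ↔
      (∃ B, ∀ n, M.run w n = c → cnt M w n c + 1 ≤ B) := by
    constructor
    · rintro ⟨B, hB⟩
      refine ⟨B, fun n hn => ?_⟩
      have := hB n _ (by rw [toMax_outs]; exact List.mem_singleton_self _) hn
      simpa [hn] using this
    · rintro ⟨B, hB⟩
      refine ⟨B, fun n p hp hpc => ?_⟩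
      rw [toMax_outs] at hp
      rcases List.mem_singleton.1 hp with rfl
      simp only at hpc
      subst hpc
      exact hB n rfl
  rw [key]
  constructor
  · rintro ⟨B, hB⟩
    by_contra hnfin
    have hinf : {m | M.run w m = c}.Infinite := hnfin
    have grow : ∀ k : ℕ, ∃ n, M.run w n = c ∧ k ≤ cnt M w n c := by
      intro k
      induction k with
      | zero =>
          obtain ⟨n, hn⟩ := hinf.nonempty
          exact ⟨n, hn, Nat.zero_le _⟩
      | succ k ih =>
          obtain ⟨n, hn, hkn⟩ := ih
          obtain ⟨m, hm1, hm2⟩ := hinf.exists_gt n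
          exact ⟨m, hm1, by
            have := cnt_lt_of_gt M w c hm2 hn
            omega⟩
    obtain ⟨n, hn, hkn⟩ := grow B
    have := hB n hn
    omega
  · intro hfin
    have hfin' : {m | M.run w m = c}.Finite := hfin
    refine ⟨hfin'.toFinset.card + 1, fun n hn => ?_⟩
    have hsub : (Finset.range n).filter (fun m => M.run w m = c) ⊆
        hfin'.toFinset := by
      intro x hx
      rw [Set.Finite.mem_toFinset]
      exact (Finset.mem_filter.1 hx).2
    have := Finset.card_le_card hsub
    unfold cnt
    omega

end Construction

/-- Deterministic max-automata capture all ω-regular languages: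
every language recognized by a deterministic Muller automaton is recognized by a
deterministic max-automaton. -/
theorem muller_le_maxAutomaton {α : Type} [Fintype α]
    (M : MullerAutomaton α) :
    ∃ A : MaxAutomaton α, A.Lang = M.Lang := by
  classical
  refine ⟨toMax M, ?_⟩
  ext w
  simp only [MaxAutomaton.Lang, MullerAutomaton.Lang, Set.mem_setOf_eq,
    MaxAutomaton.Accepts, MaxAutomaton.AcceptsFrom]
  have hacc : (toMax M).acc = mullerAcc M := rfl
  rw [hacc, mullerAcc]
  refine (eval_bigOr _ _).trans ?_
  have hb : ∀ q : M.Q, (toMax M).BoundedFrom (toMax M).init w q ↔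
      q ∉ M.InfOcc w := toMax_bounded M w
  constructor
  · rintro ⟨φ, hφ, hev⟩
    rcases List.mem_map.1 hφ with ⟨S, hS, rfl⟩
    rcases List.mem_filter.1 hS with ⟨-, hSF⟩
    have hSF2 : (↑S : Set M.Q) ∈ M.F := of_decide_eq_true hSF
    have hall := (eval_exactBC M _ S).1 hev
    have hEq : (↑S : Set M.Q) = M.InfOcc w := by
      ext q
      have hthis := hall q
      rw [hb q, not_not] at hthis
      rw [Finset.mem_coe]
      exact hthis
    rw [← hEq]
    exact hSF2
  · intro hF
    have hfin : (M.InfOcc w).Finite := Set.toFinite _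
    refine ⟨exactBC M hfin.toFinset, List.mem_map.2 ⟨hfin.toFinset,
      List.mem_filter.2 ⟨Finset.mem_toList.2 (Finset.mem_univ _),
        decide_eq_true (by rwa [Set.Finite.coe_toFinset])⟩, rfl⟩, ?_⟩
    refine (eval_exactBC M _ _).2 ?_
    intro q
    rw [hb q, Set.Finite.mem_toFinset, not_not]

end MaxReg
end

section
/- If L ⊆ (Σ×{0,1})^ω is recognized by a deterministic max-automaton, then the language { w ∈ Σ^ω : w[X] ∈ L for some finite set X ⊆ ℕ } is also recognized by a deterministic max-automaton. -/
namespace MaxReg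

/-! ### Auxiliary development for Statement 5 -/

section Aux

attribute [local instance] Classical.propDecidable

variable {γ γ₂ : Type} [DecidableEq γ] [DecidableEq γ₂]

/-- Rename the counters appearing in a counter operation. -/
def mapOp (e : γ → γ₂) : CounterOp γ → CounterOp γ₂
  | .inc c => .inc (e c)
  | .reset c => .reset (e c)
  | .output c => .output (e c)
  | .maxOp c d => .maxOp (e c) (e d)

theorem applyOps_append (l₁ l₂ : List (CounterOp γ)) (v : γ → ℕ) :
    applyOps (l₁ ++ l₂) v =
      ((applyOps l₂ (applyOps l₁ v).1).1,
        (applyOps l₁ v).2 ++ (applyOps l₂ (applyOps l₁ v).1).2) := by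
  induction l₁ generalizing v with
  | nil => simp [applyOps]
  | cons op l ih => simp [applyOps, ih, List.append_assoc]

theorem applyOps_map (e : γ → γ₂) (he : Function.Injective e)
    (l : List (CounterOp γ)) (v : γ₂ → ℕ) :
    ((applyOps (l.map (mapOp e)) v).1 ∘ e = (applyOps l (v ∘ e)).1) ∧
    (∀ c₂, (∀ c, e c ≠ c₂) → (applyOps (l.map (mapOp e)) v).1 c₂ = v c₂) ∧
    ((applyOps (l.map (mapOp e)) v).2 =
      (applyOps l (v ∘ e)).2.map (fun p => (e p.1, p.2))) := by
  induction l generalizing v with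
  | nil => exact ⟨rfl, fun _ _ => rfl, rfl⟩
  | cons op l ih =>
    have key : ∀ (op : CounterOp γ),
        ((applyOp v (mapOp e op)).1 ∘ e = (applyOp (v ∘ e) op).1) ∧
        (∀ c₂, (∀ c, e c ≠ c₂) → (applyOp v (mapOp e op)).1 c₂ = v c₂) ∧
        ((applyOp v (mapOp e op)).2 =
          (applyOp (v ∘ e) op).2.map (fun p => (e p.1, p.2))) := by
      intro op
      cases op with
      | inc c =>
        refine ⟨?_, ?_, rfl⟩
        · simpa [mapOp, applyOp] using
            Function.update_comp_eq_of_injective v he c (v (e c) + 1)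
        · intro c₂ hc₂
          simp [mapOp, applyOp, Function.update_of_ne (Ne.symm (hc₂ c))]
      | reset c =>
        refine ⟨?_, ?_, rfl⟩
        · simpa [mapOp, applyOp] using
            Function.update_comp_eq_of_injective v he c 0
        · intro c₂ hc₂
          simp [mapOp, applyOp, Function.update_of_ne (Ne.symm (hc₂ c))]
      | output c => exact ⟨rfl, fun _ _ => rfl, rfl⟩
      | maxOp c d =>
        refine ⟨?_, ?_, rfl⟩
        · simpa [mapOp, applyOp] using
            Function.update_comp_eq_of_injective v he c (max (v (e c)) (v (e d)))
        · intro c₂ hc₂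
          simp [mapOp, applyOp, Function.update_of_ne (Ne.symm (hc₂ c))]
    obtain ⟨k1, k2, k3⟩ := key op
    obtain ⟨i1, i2, i3⟩ := ih (applyOp v (mapOp e op)).1
    refine ⟨?_, ?_, ?_⟩
    · show (applyOps (l.map (mapOp e)) (applyOp v (mapOp e op)).1).1 ∘ e = _
      rw [i1, k1]
      rfl
    · intro c₂ hc₂
      show (applyOps (l.map (mapOp e)) (applyOp v (mapOp e op)).1).1 c₂ = v c₂
      rw [i2 c₂ hc₂, k2 c₂ hc₂]
    · show (applyOp v (mapOp e op)).2.toList ++ _ = _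
      rw [i3, k1, k3]
      show _ = ((applyOp (v ∘ e) op).2.toList ++
          (applyOps l (applyOp (v ∘ e) op).1).2).map (fun p => (e p.1, p.2))
      rw [List.map_append]
      congr 1
      cases (applyOp (v ∘ e) op).2 <;> rfl

/-- Applying the concatenation over a duplicate-free list of "slots" of op-lists,
each renamed into its own slot, acts independently on each slot. -/
theorem applyOps_slots {k : ℕ} (l : Fin k → List (CounterOp γ)) :
    ∀ (J : List (Fin k)), J.Nodup → ∀ (v : γ × Fin k → ℕ),
    (∀ i ∈ J, ∀ c, (applyOps (J.flatMap fun j => (l j).map (mapOp (fun c => (c, j)))) v).1 (c, i)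
        = (applyOps (l i) (fun c => v (c, i))).1 c) ∧
    (∀ i, i ∉ J → ∀ c,
      (applyOps (J.flatMap fun j => (l j).map (mapOp (fun c => (c, j)))) v).1 (c, i) = v (c, i)) ∧
    ((applyOps (J.flatMap fun j => (l j).map (mapOp (fun c => (c, j)))) v).2 =
      J.flatMap fun j =>
        (applyOps (l j) (fun c => v (c, j))).2.map (fun p => ((p.1, j), p.2))) := by
  intro J
  induction J with
  | nil => exact fun _ v => ⟨fun i hi => absurd hi List.not_mem_nil, fun _ _ _ => rfl, rfl⟩
  | cons j J ih =>
    intro hnd v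
    have hj : j ∉ J := (List.nodup_cons.1 hnd).1
    have hnd' : J.Nodup := (List.nodup_cons.1 hnd).2
    have hinj : Function.Injective (fun c : γ => (c, j)) := fun a b h => congrArg Prod.fst h
    obtain ⟨m1, m2, m3⟩ := applyOps_map (fun c : γ => (c, j)) hinj (l j) v
    set v' := (applyOps ((l j).map (mapOp (fun c => (c, j)))) v).1 with hv'
    obtain ⟨i1, i2, i3⟩ := ih hnd' v'
    have hbig : (j :: J).flatMap (fun j => (l j).map (mapOp (fun c => (c, j))))
        = ((l j).map (mapOp (fun c => (c, j)))) ++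
          (J.flatMap fun j => (l j).map (mapOp (fun c => (c, j)))) := by
      simp [List.flatMap_cons]
    have hvj : ∀ c, v' (c, j) = (applyOps (l j) (fun c => v (c, j))).1 c := by
      intro c; exact congrFun m1 c
    have hvi : ∀ i, i ≠ j → ∀ c, v' (c, i) = v (c, i) := by
      intro i hi c
      exact m2 (c, i) (fun c' h => hi (congrArg Prod.snd h).symm)
    refine ⟨?_, ?_, ?_⟩
    · intro i hi c
      rw [hbig, applyOps_append]
      rcases List.mem_cons.1 hi with h | h
      · subst h
        show (applyOps _ v').1 (c, i) = _
        rw [i2 i hj c, hvj c]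
      · have hij : i ≠ j := fun hh => hj (hh ▸ h)
        show (applyOps _ v').1 (c, i) = _
        rw [i1 i h c,
          show (fun c => v' (c, i)) = (fun c => v (c, i)) from funext (hvi i hij)]
    · intro i hi c
      have hij : i ≠ j := fun hh => hi (hh ▸ List.mem_cons_self (a := j) (l := J))
      have hiJ : i ∉ J := fun hh => hi (List.mem_cons_of_mem j hh)
      rw [hbig, applyOps_append]
      show (applyOps _ v').1 (c, i) = _
      rw [i2 i hiJ c, hvi i hij c]
    · rw [hbig, applyOps_append]
      show _ ++ (applyOps _ v').2 = _
      rw [i3, m3, List.flatMap_cons]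
      congr 1
      apply List.flatMap_congr
      intro j' hj'
      rw [show (fun c => v' (c, j')) = (fun c => v (c, j')) from
        funext (hvi j' (fun hh => hj (hh ▸ hj')))]

/-- Output values are monotone (up to an additive constant) in the initial counter
valuation. -/
theorem applyOps_dom (l : List (CounterOp γ)) (M : ℕ) :
    ∀ (v v' : γ → ℕ), (∀ c, v' c ≤ v c + M) →
    (∀ c, (applyOps l v').1 c ≤ (applyOps l v).1 c + M) ∧
    (∀ p ∈ (applyOps l v').2, ∃ p' ∈ (applyOps l v).2, p'.1 = p.1 ∧ p.2 ≤ p'.2 + M) := by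
  induction l with
  | nil => exact fun v v' h => ⟨h, by simp [applyOps]⟩
  | cons op l ih =>
    intro v v' h
    have key : (∀ c, (applyOp v' op).1 c ≤ (applyOp v op).1 c + M) ∧
        (∀ p ∈ (applyOp v' op).2.toList, ∃ p' ∈ (applyOp v op).2.toList,
          p'.1 = p.1 ∧ p.2 ≤ p'.2 + M) := by
      cases op with
      | inc c =>
        refine ⟨fun c'' => ?_, by simp [applyOp]⟩
        by_cases hc : c'' = c
        · subst hc
          simp only [applyOp, Function.update_self]
          have := h c''
          omega
        · simpa [applyOp, Function.update_of_ne hc] using h c''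
      | reset c =>
        refine ⟨fun c'' => ?_, by simp [applyOp]⟩
        by_cases hc : c'' = c
        · subst hc; simp [applyOp]
        · simpa [applyOp, Function.update_of_ne hc] using h c''
      | output c =>
        refine ⟨h, ?_⟩
        intro p hp
        simp only [applyOp, Option.toList_some, List.mem_singleton] at hp
        subst hp
        exact ⟨(c, v c), by simp [applyOp], rfl, h c⟩
      | maxOp c d =>
        refine ⟨fun c'' => ?_, by simp [applyOp]⟩
        by_cases hc : c'' = c
        · subst hc
          simp only [applyOp, Function.update_self]
          exact max_le (le_trans (h c'') (by omega)) (le_trans (h d) (by omega))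
        · simpa [applyOp, Function.update_of_ne hc] using h c''
    obtain ⟨k1, k2⟩ := key
    obtain ⟨r1, r2⟩ := ih (applyOp v op).1 (applyOp v' op).1 k1
    refine ⟨r1, ?_⟩
    intro p hp
    show ∃ p' ∈ (applyOp v op).2.toList ++ (applyOps l (applyOp v op).1).2, _
    rcases List.mem_append.1 hp with hp | hp
    · obtain ⟨p', hp', he⟩ := k2 p hp
      exact ⟨p', List.mem_append_left _ hp', he⟩
    · obtain ⟨p', hp', he⟩ := r2 p hp
      exact ⟨p', List.mem_append_right _ hp', he⟩

/-- Boundedness of a set of outputs depends only on the tail. -/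
theorem bounded_iff_tail {γ : Type} (out : ℕ → List (γ × ℕ)) (P : γ → Prop) (N : ℕ) :
    (∃ B, ∀ n, ∀ p ∈ out n, P p.1 → p.2 ≤ B) ↔
      (∃ B, ∀ n, N ≤ n → ∀ p ∈ out n, P p.1 → p.2 ≤ B) := by
  constructor
  · rintro ⟨B, hB⟩; exact ⟨B, fun n _ => hB n⟩
  · rintro ⟨B, hB⟩
    have le_foldr : ∀ (l : List ℕ) (a : ℕ), a ∈ l → a ≤ l.foldr max 0 := by
      intro l
      induction l with
      | nil => simp
      | cons b l ih =>
        intro a ha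
        rcases List.mem_cons.1 ha with h | h
        · subst h; exact le_max_left _ _
        · exact le_trans (ih a h) (le_max_right _ _)
    refine ⟨max B ((Finset.range N).sup fun n => ((out n).map Prod.snd).foldr max 0),
      fun n p hp hP => ?_⟩
    rcases le_or_gt N n with h | h
    · exact le_trans (hB n h p hp hP) (le_max_left _ _)
    · refine le_trans ?_ (le_max_right _ _)
      refine le_trans (le_foldr _ _ (List.mem_map_of_mem (f := Prod.snd) hp))
        (Finset.le_sup (f := fun n => ((out n).map Prod.snd).foldr max 0)
          (Finset.mem_range.2 h))

/-- A counting sequence (incremented exactly at steps satisfying `E`) is bounded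
iff `E` holds only finitely often. -/
theorem count_bounded_iff (E : ℕ → Prop) (val : ℕ → ℕ)
    (hE : ∀ n, E n → val (n + 1) = val n + 1)
    (hNE : ∀ n, ¬ E n → val (n + 1) = val n) :
    (∃ B, ∀ n, val n ≤ B) ↔ ∃ M, ∀ m, M ≤ m → ¬ E m := by
  have mono : ∀ a b, a ≤ b → val a ≤ val b := by
    intro a b hab
    induction b with
    | zero => simpa [Nat.le_zero.1 hab]
    | succ b ih =>
      rcases Nat.lt_or_ge a (b + 1) with hh | hh
      · refine le_trans (ih (Nat.lt_succ_iff.1 hh)) ?_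
        by_cases hEb : E b
        · rw [hE b hEb]; omega
        · rw [hNE b hEb]
      · have : a = b + 1 := le_antisymm hab hh
        simp [this]
  constructor
  · rintro ⟨B, hB⟩
    by_contra hc
    push_neg at hc
    have grow : ∀ j, ∃ n, j ≤ val n := by
      intro j
      induction j with
      | zero => exact ⟨0, Nat.zero_le _⟩
      | succ j ih =>
        obtain ⟨n, hn⟩ := ih
        obtain ⟨m, hm, hEm⟩ := hc n
        refine ⟨m + 1, ?_⟩
        have := mono n m hm
        rw [hE m hEm]
        omega
    obtain ⟨n, hn⟩ := grow (B + 1)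
    exact absurd (hB n) (by omega)
  · rintro ⟨M, hM⟩
    refine ⟨val M, fun n => ?_⟩
    rcases le_or_gt n M with hh | hh
    · exact mono n M hh
    · have : ∀ k, val (M + k) = val M := by
        intro k
        induction k with
        | zero => rfl
        | succ k ih =>
          rw [← Nat.add_assoc, hNE (M + k) (hM _ (Nat.le_add_right _ _)), ih]
      obtain ⟨k, rfl⟩ := Nat.exists_eq_add_of_le (le_of_lt hh)
      exact le_of_eq (this k)

/-- An antitone sequence of naturals is eventually constant. -/
theorem antitone_nat_stabilizes (g : ℕ → ℕ) (h : ∀ n, g (n + 1) ≤ g n) :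
    ∃ K, ∀ m, K ≤ m → g m = g K := by
  have mono : ∀ a b, a ≤ b → g b ≤ g a := by
    intro a b hab
    induction b with
    | zero => simpa [Nat.le_zero.1 hab]
    | succ b ih =>
      rcases Nat.lt_or_ge a (b + 1) with hh | hh
      · exact le_trans (h b) (ih (Nat.lt_succ_iff.1 hh))
      · have : a = b + 1 := le_antisymm hab hh
        simp [this]
  have main : ∀ (V : ℕ) (g : ℕ → ℕ), (∀ a b, a ≤ b → g b ≤ g a) → g 0 ≤ V →
      ∃ K, ∀ m, K ≤ m → g m = g K := by
    intro V
    induction V with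
    | zero =>
      intro g hmono h0
      refine ⟨0, fun m _ => ?_⟩
      have h1 : g m ≤ 0 := le_trans (hmono 0 m (Nat.zero_le _)) h0
      omega
    | succ V ih =>
      intro g hmono h0
      by_cases hconst : ∀ n, g n = g 0
      · exact ⟨0, fun m _ => (hconst m).trans (hconst 0).symm⟩
      · push_neg at hconst
        obtain ⟨n, hn⟩ := hconst
        have hlt : g n < g 0 := lt_of_le_of_ne (hmono 0 n (Nat.zero_le _)) hn
        obtain ⟨K, hK⟩ := ih (fun m => g (n + m))
          (fun a b hab => hmono (n + a) (n + b) (by omega))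
          (show g (n + 0) ≤ V by rw [Nat.add_zero]; omega)
        refine ⟨n + K, fun m hm => ?_⟩
        obtain ⟨j, rfl⟩ := Nat.exists_eq_add_of_le hm
        have := hK (K + j) (Nat.le_add_right _ _)
        rw [show n + K + j = n + (K + j) by omega, this]
  exact main (g 0) g mono le_rfl

namespace BC

variable {σ τ : Type}

def map (f : σ → τ) : BC σ → BC τ
  | .tt => .tt
  | .atom a => .atom (f a)
  | .nt φ => .nt (map f φ)
  | .an φ ψ => .an (map f φ) (map f ψ)

theorem eval_map (f : σ → τ) (g : τ → Prop) (φ : BC σ) :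
    (φ.map f).eval g ↔ φ.eval (g ∘ f) := by
  induction φ with
  | tt => exact Iff.rfl
  | atom a => exact Iff.rfl
  | nt φ ih => exact not_congr ih
  | an φ ψ ihφ ihψ => exact and_congr ihφ ihψ

theorem eval_congr {f g : σ → Prop} (h : ∀ a, f a ↔ g a) (φ : BC σ) :
    φ.eval f ↔ φ.eval g := by
  induction φ with
  | tt => exact Iff.rfl
  | atom a => exact h a
  | nt φ ih => exact not_congr ih
  | an φ ψ ihφ ihψ => exact and_congr ihφ ihψ

def orr_s5 (φ ψ : BC σ) : BC σ := .nt (.an (.nt φ) (.nt ψ))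

theorem eval_orr (f : σ → Prop) (φ ψ : BC σ) :
    (orr_s5 φ ψ).eval f ↔ φ.eval f ∨ ψ.eval f := by
  show ¬(¬ φ.eval f ∧ ¬ ψ.eval f) ↔ _
  tauto

def bigOr : List (BC σ) → BC σ
  | [] => .nt .tt
  | φ :: l => orr_s5 φ (bigOr l)

theorem eval_bigOr (f : σ → Prop) (l : List (BC σ)) :
    (bigOr l).eval f ↔ ∃ φ ∈ l, φ.eval f := by
  induction l with
  | nil => show ¬ True ↔ _; simp
  | cons φ l ih => rw [bigOr, eval_orr, ih]; simp

end BC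

namespace MaxAutomaton

variable {α : Type} (A : MaxAutomaton α)

/-- Counter values along the run from `q`, starting with counter valuation `v`. -/
def valsG (q : A.Q) (v : A.C → ℕ) (w : ℕ → α) : ℕ → (A.C → ℕ)
  | 0 => v
  | n + 1 => (applyOps (A.δ (A.runFrom q w n) (w n)).2 (valsG q v w n)).1

/-- Output (counter, value) pairs at step `n`, starting with valuation `v`. -/
def outsG (q : A.Q) (v : A.C → ℕ) (w : ℕ → α) (n : ℕ) : List (A.C × ℕ) :=
  (applyOps (A.δ (A.runFrom q w n) (w n)).2 (A.valsG q v w n)).2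

theorem valsG_zero (q : A.Q) (w : ℕ → α) (n : ℕ) :
    A.valsG q (fun _ => 0) w n = A.valsFrom q w n := by
  induction n with
  | zero => rfl
  | succ n ih => show (applyOps _ _).1 = _; rw [ih]; rfl

theorem outsG_zero (q : A.Q) (w : ℕ → α) (n : ℕ) :
    A.outsG q (fun _ => 0) w n = A.outsFrom q w n := by
  unfold outsG outsFrom
  rw [valsG_zero]

theorem runFrom_add (q : A.Q) (w : ℕ → α) (N k : ℕ) :
    A.runFrom q w (N + k) = A.runFrom (A.runFrom q w N) (suffixFrom w N) k := by
  induction k with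
  | zero => rfl
  | succ k ih => show (A.δ (A.runFrom q w (N + k)) (w (N + k))).1 = _; rw [ih]; rfl

theorem valsG_add (q : A.Q) (v : A.C → ℕ) (w : ℕ → α) (N k : ℕ) :
    A.valsG q v w (N + k) =
      A.valsG (A.runFrom q w N) (A.valsG q v w N) (suffixFrom w N) k := by
  induction k with
  | zero => rfl
  | succ k ih =>
    show (applyOps (A.δ (A.runFrom q w (N + k)) (w (N + k))).2 (A.valsG q v w (N + k))).1 = _
    rw [ih, runFrom_add]
    rfl

theorem outsG_add (q : A.Q) (v : A.C → ℕ) (w : ℕ → α) (N k : ℕ) :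
    A.outsG q v w (N + k) =
      A.outsG (A.runFrom q w N) (A.valsG q v w N) (suffixFrom w N) k := by
  unfold outsG
  rw [valsG_add, runFrom_add]
  rfl

/-- Boundedness of the outputs on counter `c`, starting from valuation `v`. -/
def BoundedG (q : A.Q) (v : A.C → ℕ) (w : ℕ → α) (c : A.C) : Prop :=
  ∃ B, ∀ n, ∀ p ∈ A.outsG q v w n, p.1 = c → p.2 ≤ B

theorem boundedFrom_iff_boundedG (q : A.Q) (w : ℕ → α) (c : A.C) :
    A.BoundedFrom q w c ↔ A.BoundedG q (fun _ => 0) w c := by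
  unfold BoundedFrom BoundedG
  constructor <;> (rintro ⟨B, hB⟩; refine ⟨B, fun n => ?_⟩)
  · rw [outsG_zero]; exact hB n
  · rw [← outsG_zero]; exact hB n

theorem valsG_dom (q : A.Q) (w : ℕ → α) (M : ℕ) (v v' : A.C → ℕ)
    (h : ∀ c, v' c ≤ v c + M) (n : ℕ) :
    (∀ c, A.valsG q v' w n c ≤ A.valsG q v w n c + M) ∧
    (∀ p ∈ A.outsG q v' w n, ∃ p' ∈ A.outsG q v w n, p'.1 = p.1 ∧ p.2 ≤ p'.2 + M) := by
  induction n with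
  | zero => exact ⟨h, (applyOps_dom _ M _ _ h).2⟩
  | succ n ih => exact ⟨(applyOps_dom _ M _ _ ih.1).1, (applyOps_dom _ M _ _
      ((applyOps_dom _ M _ _ ih.1).1)).2⟩

theorem boundedG_mono (q : A.Q) (w : ℕ → α) (M : ℕ) (v v' : A.C → ℕ)
    (h : ∀ c, v' c ≤ v c + M) (c : A.C) (hb : A.BoundedG q v w c) :
    A.BoundedG q v' w c := by
  obtain ⟨B, hB⟩ := hb
  refine ⟨B + M, fun n p hp hc => ?_⟩
  obtain ⟨p', hp', h1, h2⟩ := (A.valsG_dom q w M v v' h n).2 p hp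
  have := hB n p' hp' (h1.trans hc)
  omega

theorem boundedG_congr [Fintype A.C] (q : A.Q) (w : ℕ → α) (v v' : A.C → ℕ) (c : A.C) :
    A.BoundedG q v w c ↔ A.BoundedG q v' w c := by
  constructor
  · exact A.boundedG_mono q w (Finset.univ.sup v') v v'
      (fun c => le_trans (Finset.le_sup (Finset.mem_univ c)) (Nat.le_add_left _ _)) c
  · exact A.boundedG_mono q w (Finset.univ.sup v) v' v
      (fun c => le_trans (Finset.le_sup (Finset.mem_univ c)) (Nat.le_add_left _ _)) c

/-- Boundedness of the output sequence of a counter only depends on the behaviour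
from any position `N` on. -/
theorem boundedFrom_shift (q : A.Q) (w : ℕ → α) (c : A.C) (N : ℕ) :
    A.BoundedFrom q w c ↔ A.BoundedFrom (A.runFrom q w N) (suffixFrom w N) c := by
  rw [A.boundedFrom_iff_boundedG q w c, A.boundedFrom_iff_boundedG]
  rw [← A.boundedG_congr (A.runFrom q w N) (suffixFrom w N)
    (A.valsG q (fun _ => 0) w N) (fun _ => 0) c]
  unfold BoundedG
  rw [bounded_iff_tail (A.outsG q (fun _ => 0) w) (fun x => x = c) N]
  constructor
  · rintro ⟨B, hB⟩
    refine ⟨B, fun k p hp hc => ?_⟩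
    rw [← A.outsG_add q _ w N k] at hp
    exact hB (N + k) (Nat.le_add_right _ _) p hp hc
  · rintro ⟨B, hB⟩
    refine ⟨B, fun n hn p hp hc => ?_⟩
    obtain ⟨k, rfl⟩ := Nat.exists_eq_add_of_le hn
    rw [A.outsG_add q _ w N k] at hp
    exact hB k p hp hc

theorem acceptsFrom_shift (q : A.Q) (w : ℕ → α) (N : ℕ) :
    A.AcceptsFrom q w ↔ A.AcceptsFrom (A.runFrom q w N) (suffixFrom w N) :=
  BC.eval_congr (fun c => A.boundedFrom_shift q w c N) A.acc

theorem runFrom_congr (q : A.Q) (w₁ w₂ : ℕ → α) (n : ℕ)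
    (h : ∀ m, m < n → w₁ m = w₂ m) :
    A.runFrom q w₁ n = A.runFrom q w₂ n := by
  induction n with
  | zero => rfl
  | succ n ih =>
    show (A.δ (A.runFrom q w₁ n) (w₁ n)).1 = (A.δ (A.runFrom q w₂ n) (w₂ n)).1
    rw [ih (fun m hm => h m (by omega)), h n (by omega)]

end MaxAutomaton

section Construction

attribute [local instance] Classical.propDecidable

/-- The word `w`, annotated with the bit `false` everywhere, from position `N` on. -/
def falseWord {α : Type} (w : ℕ → α) (N : ℕ) : ℕ → α × Bool := fun k => (w (N + k), false)

theorem suffixFrom_falseWord {α : Type} (w : ℕ → α) (N j : ℕ) :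
    suffixFrom (falseWord w N) j = falseWord w (N + j) :=
  funext fun k => by simp [suffixFrom, falseWord, Nat.add_assoc]

theorem suffix_withSet_eq_falseWord {α : Type} (w : ℕ → α) (X : Finset ℕ) (N : ℕ)
    (hX : ∀ x ∈ X, x < N) :
    suffixFrom (withSet w X) N = falseWord w N := by
  funext k
  have : N + k ∉ X := fun hm => absurd (hX _ hm) (by omega)
  simp [suffixFrom, withSet, falseWord, this]

/-- `i` survives: no more senior slot has the same image under `f`. -/
def survive {Q : Type} {k : ℕ} (f : Q → Q) (σ : Fin k → Q) (i : Fin k) : Prop :=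
  ∀ j, j < i → f (σ j) ≠ f (σ i)

theorem exists_sigmaStep {Q : Type} [Fintype Q] (f : Q → Q)
    (σ : Fin (Fintype.card Q) → Q) :
    ∃ σ' : Fin (Fintype.card Q) → Q, Function.Surjective σ' ∧
      ∀ i, survive f σ i → σ' i = f (σ i) := by
  classical
  set S : Finset (Fin (Fintype.card Q)) := Finset.univ.filter (fun i => survive f σ i) with hS
  set T : Finset Q := S.image (fun i => f (σ i)) with hT
  have hinj : Set.InjOn (fun i => f (σ i)) S := by
    intro i hi j hj hij
    by_contra hne
    rcases lt_or_gt_of_ne hne with h | h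
    · exact (Finset.mem_filter.1 (Finset.mem_coe.1 hj)).2 i h hij
    · exact (Finset.mem_filter.1 (Finset.mem_coe.1 hi)).2 j h hij.symm
  have hcardT : T.card = S.card := Finset.card_image_of_injOn hinj
  have hcard : ((Finset.univ : Finset (Fin (Fintype.card Q))) \ S).card =
      ((Finset.univ : Finset Q) \ T).card := by
    rw [Finset.card_sdiff_of_subset (Finset.subset_univ _), Finset.card_sdiff_of_subset (Finset.subset_univ _),
      hcardT, Finset.card_univ, Finset.card_univ, Fintype.card_fin]
  have e : {x // x ∈ (Finset.univ : Finset (Fin (Fintype.card Q))) \ S} ≃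
      {x // x ∈ (Finset.univ : Finset Q) \ T} :=
    Fintype.equivOfCardEq (by rw [Fintype.card_coe, Fintype.card_coe, hcard])
  refine ⟨fun i => if h : survive f σ i then f (σ i)
    else (e ⟨i, by simp [hS, h]⟩ : Q), ?_, ?_⟩
  · intro q
    by_cases hq : q ∈ T
    · obtain ⟨i, hiS, hiq⟩ := Finset.mem_image.1 hq
      have hsurv : survive f σ i := (Finset.mem_filter.1 hiS).2
      exact ⟨i, by dsimp only; rw [dif_pos hsurv]; exact hiq⟩
    · have hmem : (⟨q, by simp [hq]⟩ : {x // x ∈ (Finset.univ : Finset Q) \ T}) =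
          e (e.symm ⟨q, by simp [hq]⟩) := (e.apply_symm_apply _).symm
      set x := e.symm ⟨q, by simp [hq]⟩ with hx
      have hns : ¬ survive f σ x.1 := by
        have := x.2
        simp only [Finset.mem_sdiff, Finset.mem_univ, true_and, hS,
          Finset.mem_filter] at this
        tauto
      refine ⟨x.1, ?_⟩
      dsimp only
      rw [dif_neg hns]
      have hxx : (⟨x.1, by simp [hS, hns]⟩ :
          {x // x ∈ (Finset.univ : Finset (Fin (Fintype.card Q))) \ S}) = x :=
        Subtype.ext rfl
      rw [hxx]
      exact (congrArg Subtype.val hmem).symm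
  · intro i h
    dsimp only
    rw [dif_pos h]

/-- The deterministic update of the slot assignment. -/
noncomputable def sigmaStep {Q : Type} [Fintype Q] (f : Q → Q)
    (σ : Fin (Fintype.card Q) → Q) : Fin (Fintype.card Q) → Q :=
  Classical.choose (exists_sigmaStep f σ)

theorem sigmaStep_surj {Q : Type} [Fintype Q] (f : Q → Q)
    (σ : Fin (Fintype.card Q) → Q) : Function.Surjective (sigmaStep f σ) :=
  (Classical.choose_spec (exists_sigmaStep f σ)).1

theorem sigmaStep_survive {Q : Type} [Fintype Q] (f : Q → Q)
    (σ : Fin (Fintype.card Q) → Q) (i : Fin (Fintype.card Q)) (h : survive f σ i) :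
    sigmaStep f σ i = f (σ i) :=
  (Classical.choose_spec (exists_sigmaStep f σ)).2 i h

variable {α : Type} (A : MaxAutomaton (α × Bool))

/-- Deterministic transition on states, fixing the bit `false`. -/
def fstep (a : α) (q : A.Q) : A.Q := (A.δ q (a, false)).1

/-- One step of the reachable-set (subset) construction. -/
noncomputable def rstep (R : A.Q → Bool) (a : α) : A.Q → Bool := fun q' =>
  if ∃ q, R q = true ∧ ∃ b, (A.δ q (a, b)).1 = q' then true else false

/-- The operations executed by slot `i` in one step. -/
noncomputable def slotList (σ : Fin (Fintype.card A.Q) → A.Q) (R : A.Q → Bool)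
    (a : α) (i : Fin (Fintype.card A.Q)) : List (CounterOp (A.C ⊕ Bool)) :=
  (if survive (fstep A a) σ i
    then (A.δ (σ i) (a, false)).2.map (mapOp Sum.inl)
    else [.inc (Sum.inr false)]) ++
  ((if R (σ i) = true then [.inc (Sum.inr true)] else []) ++
   [.output (Sum.inr false), .output (Sum.inr true)])

/-- All the operations executed in one step. -/
noncomputable def stepOps (σ : Fin (Fintype.card A.Q) → A.Q) (R : A.Q → Bool) (a : α) :
    List (CounterOp ((A.C ⊕ Bool) × Fin (Fintype.card A.Q))) :=
  (List.finRange (Fintype.card A.Q)).flatMap fun i =>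
    (slotList A σ R a i).map (mapOp (fun c => (c, i)))

/-- The max-automaton recognizing `∃ finite X, w[X] ∈ L`. -/
noncomputable def projAut : MaxAutomaton α where
  Q := (Fin (Fintype.card A.Q) → A.Q) × (A.Q → Bool)
  C := (A.C ⊕ Bool) × Fin (Fintype.card A.Q)
  finQ := by
    haveI := Classical.decEq A.Q
    infer_instance
  finC := inferInstance
  decC := inferInstance
  init := ((Fintype.equivFin A.Q).symm, fun q => if q = A.init then true else false)
  δ := fun s a => ((sigmaStep (fstep A a) s.1, rstep A s.2 a), stepOps A s.1 s.2 a)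
  acc := BC.bigOr ((List.finRange (Fintype.card A.Q)).map fun i =>
    .an (BC.map (fun c => (Sum.inl c, i)) A.acc)
      (.an (.atom (Sum.inr false, i)) (.nt (.atom (Sum.inr true, i)))))

theorem slotList_spec (σ : Fin (Fintype.card A.Q) → A.Q) (R : A.Q → Bool) (a : α)
    (i : Fin (Fintype.card A.Q)) (u : (A.C ⊕ Bool) → ℕ) :
    (∀ c, (applyOps (slotList A σ R a i) u).1 (Sum.inl c) =
      if survive (fstep A a) σ i
        then (applyOps (A.δ (σ i) (a, false)).2 (u ∘ Sum.inl)).1 c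
        else u (Sum.inl c)) ∧
    ((applyOps (slotList A σ R a i) u).1 (Sum.inr false) =
      u (Sum.inr false) + (if survive (fstep A a) σ i then 0 else 1)) ∧
    ((applyOps (slotList A σ R a i) u).1 (Sum.inr true) =
      u (Sum.inr true) + (if R (σ i) = true then 1 else 0)) ∧
    ((applyOps (slotList A σ R a i) u).2 =
      (if survive (fstep A a) σ i
        then (applyOps (A.δ (σ i) (a, false)).2 (u ∘ Sum.inl)).2.map
          (fun p => (Sum.inl p.1, p.2))
        else []) ++
      [(Sum.inr false, (applyOps (slotList A σ R a i) u).1 (Sum.inr false)),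
       (Sum.inr true, (applyOps (slotList A σ R a i) u).1 (Sum.inr true))]) := by
  obtain ⟨m1, m2, m3⟩ := applyOps_map (Sum.inl : A.C → A.C ⊕ Bool) Sum.inl_injective
    (A.δ (σ i) (a, false)).2 u
  have hinl : ∀ c, (applyOps ((A.δ (σ i) (a, false)).2.map (mapOp Sum.inl)) u).1 (Sum.inl c)
      = (applyOps (A.δ (σ i) (a, false)).2 (u ∘ Sum.inl)).1 c := fun c => congrFun m1 c
  have hinr : ∀ b, (applyOps ((A.δ (σ i) (a, false)).2.map (mapOp Sum.inl)) u).1 (Sum.inr b)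
      = u (Sum.inr b) := fun b => m2 _ (fun c h => by simp at h)
  by_cases hsurv : survive (fstep A a) σ i <;> by_cases hev : R (σ i) = true <;>
    refine ⟨fun c => ?_, ?_, ?_, ?_⟩ <;>
    simp [slotList, hsurv, hev, applyOps_append, applyOps, applyOp, m3, hinl, hinr,
      Function.update_apply]

theorem stepOps_spec (σ : Fin (Fintype.card A.Q) → A.Q) (R : A.Q → Bool) (a : α)
    (v : ((A.C ⊕ Bool) × Fin (Fintype.card A.Q)) → ℕ) :
    (∀ (i : Fin (Fintype.card A.Q)) (c : A.C ⊕ Bool),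
      (applyOps (stepOps A σ R a) v).1 (c, i) =
        (applyOps (slotList A σ R a i) (fun c => v (c, i))).1 c) ∧
    ((applyOps (stepOps A σ R a) v).2 =
      (List.finRange (Fintype.card A.Q)).flatMap fun i =>
        (applyOps (slotList A σ R a i) (fun c => v (c, i))).2.map (fun p => ((p.1, i), p.2))) := by
  obtain ⟨h1, _, h3⟩ := applyOps_slots (slotList A σ R a)
    (List.finRange (Fintype.card A.Q)) (List.nodup_finRange _) v
  exact ⟨fun i c => h1 i (List.mem_finRange i) c, h3⟩

variable (w : ℕ → α)

/-- The slot assignment along the run of the constructed automaton. -/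
noncomputable def sigB (n : ℕ) : Fin (Fintype.card A.Q) → A.Q :=
  ((projAut A).runFrom (projAut A).init w n).1

/-- The reachable set along the run of the constructed automaton. -/
noncomputable def rbB (n : ℕ) : A.Q → Bool :=
  ((projAut A).runFrom (projAut A).init w n).2

/-- The counter values along the run of the constructed automaton. -/
noncomputable def vB (n : ℕ) : ((A.C ⊕ Bool) × Fin (Fintype.card A.Q)) → ℕ :=
  (projAut A).valsFrom (projAut A).init w n

theorem sigB_succ (n : ℕ) :
    sigB A w (n + 1) = sigmaStep (fstep A (w n)) (sigB A w n) := rfl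

theorem rbB_succ (n : ℕ) :
    rbB A w (n + 1) = rstep A (rbB A w n) (w n) := rfl

theorem vB_succ (n : ℕ) :
    vB A w (n + 1) = (applyOps (stepOps A (sigB A w n) (rbB A w n) (w n)) (vB A w n)).1 := rfl

theorem outsB_eq (n : ℕ) :
    (projAut A).outsFrom (projAut A).init w n =
      (applyOps (stepOps A (sigB A w n) (rbB A w n) (w n)) (vB A w n)).2 := rfl

theorem sigB_surj (n : ℕ) : Function.Surjective (sigB A w n) := by
  induction n with
  | zero => exact (Fintype.equivFin A.Q).symm.surjective
  | succ n _ => exact sigmaStep_surj _ _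

theorem memR (n : ℕ) (q : A.Q) :
    rbB A w n q = true ↔
      ∃ X : Finset ℕ, (∀ x ∈ X, x < n) ∧ A.runFrom A.init (withSet w X) n = q := by
  induction n generalizing q with
  | zero =>
    show (if q = A.init then true else false) = true ↔ _
    constructor
    · intro h
      have : q = A.init := by by_contra hne; simp [hne] at h
      exact ⟨∅, by simp, this.symm⟩
    · rintro ⟨X, -, hX⟩
      simp [← hX, MaxAutomaton.runFrom]
  | succ n ih =>
    show rstep A (rbB A w n) (w n) q = true ↔ _
    rw [rstep]
    constructor
    · intro h
      have h' : ∃ q₀, rbB A w n q₀ = true ∧ ∃ b, (A.δ q₀ (w n, b)).1 = q := by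
        by_contra hc; simp only [if_neg hc] at h; exact absurd h (by simp)
      obtain ⟨q₀, hq₀, b, hb⟩ := h'
      obtain ⟨X, hXlt, hXrun⟩ := (ih q₀).1 hq₀
      refine ⟨if b then insert n X else X, ?_, ?_⟩
      · intro x hx
        rcases b with _ | _
        · simp only [Bool.false_eq_true, if_false] at hx
          exact lt_trans (hXlt x hx) (Nat.lt_succ_self n)
        · simp only [if_true, Finset.mem_insert] at hx
          rcases hx with h | h
          · omega
          · exact lt_trans (hXlt x h) (Nat.lt_succ_self n)
      · show (A.δ (A.runFrom A.init (withSet w (if b then insert n X else X)) n)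
            (withSet w (if b then insert n X else X) n)).1 = q
        have hagree : A.runFrom A.init (withSet w (if b then insert n X else X)) n
            = A.runFrom A.init (withSet w X) n := by
          apply MaxAutomaton.runFrom_congr
          intro m hm
          have hmn : m ≠ n := by omega
          rcases b with _ | _
          · simp
          · simp [withSet, Finset.mem_insert, hmn]
        have hbit : withSet w (if b then insert n X else X) n = (w n, b) := by
          have hnX : n ∉ X := fun hh => absurd (hXlt n hh) (by omega)
          rcases b with _ | _
          · simp [withSet, hnX]
          · simp [withSet, Finset.mem_insert]
        rw [hagree, hXrun, hbit, hb]
    · rintro ⟨X, hXlt, hXrun⟩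
      have hmem : ∃ q₀, rbB A w n q₀ = true ∧ ∃ b, (A.δ q₀ (w n, b)).1 = q := by
        refine ⟨A.runFrom A.init (withSet w X) n, ?_, withSet w X n |>.2, ?_⟩
        · apply (ih _).2
          refine ⟨X.filter (· < n), fun x hx => (Finset.mem_filter.1 hx).2, ?_⟩
          apply MaxAutomaton.runFrom_congr
          intro m hm
          have : m ∈ X.filter (· < n) ↔ m ∈ X := by
            simp only [Finset.mem_filter, and_iff_left_iff_imp]
            exact fun _ => hm
          simp [withSet, this]
        · show (A.δ (A.runFrom A.init (withSet w X) n) (withSet w X n)).1 = q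
          exact hXrun
      rw [if_pos hmem]

theorem vB_d_succ (n : ℕ) (i : Fin (Fintype.card A.Q)) :
    vB A w (n + 1) (Sum.inr false, i) = vB A w n (Sum.inr false, i) +
      (if survive (fstep A (w n)) (sigB A w n) i then 0 else 1) := by
  rw [vB_succ, (stepOps_spec A _ _ _ _).1 i _]
  exact (slotList_spec A _ _ _ i _).2.1

theorem vB_e_succ (n : ℕ) (i : Fin (Fintype.card A.Q)) :
    vB A w (n + 1) (Sum.inr true, i) = vB A w n (Sum.inr true, i) +
      (if rbB A w n (sigB A w n i) = true then 1 else 0) := by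
  rw [vB_succ, (stepOps_spec A _ _ _ _).1 i _]
  exact (slotList_spec A _ _ _ i _).2.2.1

theorem outsB_mem_iff (n : ℕ) (p : ((A.C ⊕ Bool) × Fin (Fintype.card A.Q)) × ℕ) :
    p ∈ (projAut A).outsFrom (projAut A).init w n ↔
      ∃ i, ∃ pa ∈ (applyOps (slotList A (sigB A w n) (rbB A w n) (w n) i)
        (fun c => vB A w n (c, i))).2, p = ((pa.1, i), pa.2) := by
  rw [outsB_eq, (stepOps_spec A _ _ _ _).2]
  show p ∈ (List.finRange _).flatMap (fun i => ((applyOps (slotList A (sigB A w n) (rbB A w n) (w n) i)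
    (fun c => vB A w n (c, i))).2.map (fun p => ((p.1, i), p.2)) :
      List (((A.C ⊕ Bool) × Fin (Fintype.card A.Q)) × ℕ))) ↔ _
  simp only [List.mem_flatMap, List.mem_map, List.mem_finRange, true_and]
  constructor
  · rintro ⟨i, pa, hpa, he⟩
    exact ⟨i, pa, hpa, he.symm⟩
  · rintro ⟨i, pa, hpa, he⟩
    exact ⟨i, pa, hpa, he.symm⟩

theorem out_dpair (n : ℕ) (i : Fin (Fintype.card A.Q)) (b : Bool) :
    ((Sum.inr b, i), vB A w (n + 1) (Sum.inr b, i)) ∈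
      (projAut A).outsFrom (projAut A).init w n := by
  rw [outsB_mem_iff]
  refine ⟨i, (Sum.inr b, (applyOps (slotList A (sigB A w n) (rbB A w n) (w n) i)
    (fun c => vB A w n (c, i))).1 (Sum.inr b)), ?_, ?_⟩
  · have := (slotList_spec A (sigB A w n) (rbB A w n) (w n) i (fun c => vB A w n (c, i))).2.2.2
    rw [this]
    cases b <;> simp
  · have : vB A w (n + 1) (Sum.inr b, i) =
        (applyOps (slotList A (sigB A w n) (rbB A w n) (w n) i)
          (fun c => vB A w n (c, i))).1 (Sum.inr b) := by
      rw [vB_succ]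
      exact (stepOps_spec A _ _ _ _).1 i _
    rw [this]

theorem out_dpair_val (n : ℕ) (i : Fin (Fintype.card A.Q)) (b : Bool)
    (p : ((A.C ⊕ Bool) × Fin (Fintype.card A.Q)) × ℕ)
    (hp : p ∈ (projAut A).outsFrom (projAut A).init w n) (hid : p.1 = (Sum.inr b, i)) :
    p.2 = vB A w (n + 1) (Sum.inr b, i) := by
  rw [outsB_mem_iff] at hp
  obtain ⟨i', pa, hpa, rfl⟩ := hp
  have h1 : pa.1 = Sum.inr b := congrArg Prod.fst hid
  have h2 : i = i' := (congrArg Prod.snd hid).symm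
  subst h2
  have hout := (slotList_spec A (sigB A w n) (rbB A w n) (w n) i
    (fun c => vB A w n (c, i))).2.2.2
  rw [hout] at hpa
  have hv : vB A w (n + 1) (Sum.inr b, i) =
      (applyOps (slotList A (sigB A w n) (rbB A w n) (w n) i)
        (fun c => vB A w n (c, i))).1 (Sum.inr b) := by
    rw [vB_succ]
    exact (stepOps_spec A _ _ _ _).1 i _
  rcases List.mem_append.1 hpa with h | h
  · exfalso
    by_cases hs : survive (fstep A (w n)) (sigB A w n) i
    · rw [if_pos hs] at h
      obtain ⟨q, -, rfl⟩ := List.mem_map.1 h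
      simp at h1
    · rw [if_neg hs] at h
      exact absurd h List.not_mem_nil
  · show pa.2 = _
    rw [hv]
    rcases List.mem_cons.1 h with h | h
    · have hb : b = false := Sum.inr_injective (by rw [← h1, h])
      subst hb
      rw [h]
    · rcases List.mem_cons.1 h with h | h
      · have hb : b = true := Sum.inr_injective (by rw [← h1, h])
        subst hb
        rw [h]
      · exact absurd h List.not_mem_nil

theorem out_inl_mem (n : ℕ) (i : Fin (Fintype.card A.Q))
    (hs : survive (fstep A (w n)) (sigB A w n) i)
    (pa : A.C × ℕ)
    (hpa : pa ∈ (applyOps (A.δ (sigB A w n i) (w n, false)).2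
      (fun c => vB A w n (Sum.inl c, i))).2) :
    ((Sum.inl pa.1, i), pa.2) ∈ (projAut A).outsFrom (projAut A).init w n := by
  rw [outsB_mem_iff]
  refine ⟨i, (Sum.inl pa.1, pa.2), ?_, rfl⟩
  have hout := (slotList_spec A (sigB A w n) (rbB A w n) (w n) i
    (fun c => vB A w n (c, i))).2.2.2
  rw [hout, if_pos hs]
  apply List.mem_append_left
  exact List.mem_map.2 ⟨pa, hpa, rfl⟩

theorem out_inl_char (n : ℕ) (i : Fin (Fintype.card A.Q)) (c : A.C)
    (p : ((A.C ⊕ Bool) × Fin (Fintype.card A.Q)) × ℕ)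
    (hp : p ∈ (projAut A).outsFrom (projAut A).init w n) (hid : p.1 = (Sum.inl c, i)) :
    survive (fstep A (w n)) (sigB A w n) i ∧
      ∃ pa ∈ (applyOps (A.δ (sigB A w n i) (w n, false)).2
        (fun c => vB A w n (Sum.inl c, i))).2, pa.1 = c ∧ p.2 = pa.2 := by
  rw [outsB_mem_iff] at hp
  obtain ⟨i', pa, hpa, rfl⟩ := hp
  have h1 : pa.1 = Sum.inl c := congrArg Prod.fst hid
  have h2 : i = i' := (congrArg Prod.snd hid).symm
  subst h2
  have hout := (slotList_spec A (sigB A w n) (rbB A w n) (w n) i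
    (fun c => vB A w n (c, i))).2.2.2
  rw [hout] at hpa
  rcases List.mem_append.1 hpa with h | h
  · by_cases hs : survive (fstep A (w n)) (sigB A w n) i
    · rw [if_pos hs] at h
      obtain ⟨q, hq, hqe⟩ := List.mem_map.1 h
      refine ⟨hs, q, hq, ?_, ?_⟩
      · have hh : (Sum.inl q.1 : A.C ⊕ Bool) = Sum.inl c := by rw [← h1, ← hqe]
        exact Sum.inl_injective hh
      · show pa.2 = q.2
        rw [← hqe]
    · rw [if_neg hs] at h
      exact absurd h List.not_mem_nil
  · exfalso
    rcases List.mem_cons.1 h with h | h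
    · rw [h] at h1; simp at h1
    · rcases List.mem_cons.1 h with h | h
      · rw [h] at h1; simp at h1
      · exact absurd h List.not_mem_nil

theorem slotRun (M : ℕ) (i : Fin (Fintype.card A.Q))
    (h : ∀ m, M ≤ m → survive (fstep A (w m)) (sigB A w m) i) (k : ℕ) :
    sigB A w (M + k) i = A.runFrom (sigB A w M i) (falseWord w M) k ∧
      (fun c => vB A w (M + k) (Sum.inl c, i)) =
        A.valsG (sigB A w M i) (fun c => vB A w M (Sum.inl c, i)) (falseWord w M) k := by
  induction k with
  | zero => exact ⟨rfl, rfl⟩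
  | succ k ih =>
    constructor
    · show sigmaStep (fstep A (w (M + k))) (sigB A w (M + k)) i = _
      rw [sigmaStep_survive _ _ _ (h _ (Nat.le_add_right _ _))]
      show (A.δ (sigB A w (M + k) i) (w (M + k), false)).1 = _
      rw [ih.1]
      rfl
    · funext c
      show vB A w ((M + k) + 1) (Sum.inl c, i) = _
      rw [vB_succ, (stepOps_spec A _ _ _ _).1 i, (slotList_spec A _ _ _ i _).1 c,
        if_pos (h _ (Nat.le_add_right _ _))]
      show (applyOps (A.δ (sigB A w (M + k) i) (w (M + k), false)).2
        (fun c => vB A w (M + k) (Sum.inl c, i))).1 c = _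
      rw [ih.1, ih.2]
      rfl

theorem bd_d (i : Fin (Fintype.card A.Q)) :
    (projAut A).BoundedFrom (projAut A).init w (Sum.inr false, i) ↔
      ∃ M, ∀ m, M ≤ m → survive (fstep A (w m)) (sigB A w m) i := by
  have hcnt := count_bounded_iff (fun n => ¬ survive (fstep A (w n)) (sigB A w n) i)
    (fun n => vB A w n (Sum.inr false, i))
    (fun n hn => by rw [vB_d_succ, if_neg hn])
    (fun n hn => by rw [vB_d_succ, if_pos (not_not.1 hn)]; omega)
  constructor
  · rintro ⟨B, hB⟩
    obtain ⟨M, hM⟩ := hcnt.1 ⟨B, fun n => by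
      cases n with
      | zero => exact Nat.zero_le _
      | succ n => exact hB n _ (out_dpair A w n i false) rfl⟩
    exact ⟨M, fun m hm => not_not.1 (hM m hm)⟩
  · rintro ⟨M, hM⟩
    obtain ⟨B, hv⟩ := hcnt.2 ⟨M, fun m hm => not_not_intro (hM m hm)⟩
    refine ⟨B, fun n p hp hid => ?_⟩
    rw [out_dpair_val A w n i false p hp hid]
    exact hv (n + 1)

theorem bd_e (i : Fin (Fintype.card A.Q)) :
    ¬ (projAut A).BoundedFrom (projAut A).init w (Sum.inr true, i) ↔
      ∀ N, ∃ m, N ≤ m ∧ rbB A w m (sigB A w m i) = true := by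
  have hcnt := count_bounded_iff (fun n => rbB A w n (sigB A w n i) = true)
    (fun n => vB A w n (Sum.inr true, i))
    (fun n hn => by rw [vB_e_succ, if_pos hn])
    (fun n hn => by rw [vB_e_succ, if_neg hn]; omega)
  have hb : (projAut A).BoundedFrom (projAut A).init w (Sum.inr true, i) ↔
      ∃ M, ∀ m, M ≤ m → ¬ rbB A w m (sigB A w m i) = true := by
    rw [← hcnt]
    constructor
    · rintro ⟨B, hB⟩
      refine ⟨B, fun n => ?_⟩
      cases n with
      | zero => exact Nat.zero_le _
      | succ n => exact hB n _ (out_dpair A w n i true) rfl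
    · rintro ⟨B, hv⟩
      refine ⟨B, fun n p hp hid => ?_⟩
      rw [out_dpair_val A w n i true p hp hid]
      exact hv (n + 1)
  rw [hb]
  push_neg
  constructor
  · intro h N
    obtain ⟨m, hm1, hm2⟩ := h N
    exact ⟨m, hm1, hm2⟩
  · intro h N
    obtain ⟨m, hm1, hm2⟩ := h N
    exact ⟨m, hm1, hm2⟩

theorem bd_inl (M : ℕ) (i : Fin (Fintype.card A.Q))
    (h : ∀ m, M ≤ m → survive (fstep A (w m)) (sigB A w m) i) (c : A.C) :
    ((projAut A).BoundedFrom (projAut A).init w (Sum.inl c, i) ↔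
      A.BoundedFrom (sigB A w M i) (falseWord w M) c) := by
  rw [A.boundedFrom_iff_boundedG,
    A.boundedG_congr _ _ (fun _ => 0) (fun c => vB A w M (Sum.inl c, i))]
  unfold MaxAutomaton.BoundedFrom MaxAutomaton.BoundedG
  rw [bounded_iff_tail ((projAut A).outsFrom (projAut A).init w)
    (fun x => x = (Sum.inl c, i)) M]
  have houts : ∀ k, A.outsG (sigB A w M i) (fun c => vB A w M (Sum.inl c, i))
      (falseWord w M) k =
      (applyOps (A.δ (sigB A w (M + k) i) (w (M + k), false)).2
        (fun c => vB A w (M + k) (Sum.inl c, i))).2 := by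
    intro k
    unfold MaxAutomaton.outsG
    rw [← (slotRun A w M i h k).1, ← (slotRun A w M i h k).2]
    rfl
  constructor
  · rintro ⟨B, hB⟩
    refine ⟨B, fun k pa hpa hc => ?_⟩
    rw [houts k] at hpa
    have := hB (M + k) (Nat.le_add_right _ _) _
      (out_inl_mem A w (M + k) i (h _ (Nat.le_add_right _ _)) pa hpa) (by rw [hc])
    exact this
  · rintro ⟨B, hB⟩
    refine ⟨B, fun n hn p hp hid => ?_⟩
    obtain ⟨k, rfl⟩ := Nat.exists_eq_add_of_le hn
    obtain ⟨hs, pa, hpa, hpac, hpval⟩ := out_inl_char A w (M + k) i c p hp hid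
    rw [hpval]
    exact hB k pa (by rw [houts k]; exact hpa) hpac

/-- Every state occupied at time `N` is eventually tracked by a slot that
survives forever. -/
theorem track (N : ℕ) (q : A.Q) :
    ∃ K i, (∀ m, N + K ≤ m → survive (fstep A (w m)) (sigB A w m) i) ∧
      sigB A w (N + K) i = A.runFrom q (falseWord w N) K := by
  classical
  obtain ⟨i0, hi0⟩ := sigB_surj A w N q
  set step : ∀ (k : ℕ), Fin (Fintype.card A.Q) → Fin (Fintype.card A.Q) := fun k ik =>
    if survive (fstep A (w (N + k))) (sigB A w (N + k)) ik then ik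
    else (Finset.univ.filter (fun j => fstep A (w (N + k)) (sigB A w (N + k) j) =
      fstep A (w (N + k)) (sigB A w (N + k) ik))).min' ⟨ik, by simp⟩ with hstep
  set I : ℕ → Fin (Fintype.card A.Q) :=
    fun k => Nat.rec (motive := fun _ => Fin (Fintype.card A.Q)) i0 step k with hI
  have hIsucc : ∀ k, I (k + 1) = step k (I k) := fun k => rfl
  have P1 : ∀ k, sigB A w (N + k) (I k) = A.runFrom q (falseWord w N) k := by
    intro k
    induction k with
    | zero => exact hi0
    | succ k ih =>
      rw [hIsucc k]
      by_cases hs : survive (fstep A (w (N + k))) (sigB A w (N + k)) (I k)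
      · rw [hstep]
        dsimp only
        rw [if_pos hs]
        show sigmaStep (fstep A (w (N + k))) (sigB A w (N + k)) (I k) = _
        rw [sigmaStep_survive _ _ _ hs]
        show fstep A (w (N + k)) (sigB A w (N + k) (I k)) = _
        rw [ih]
        rfl
      · rw [hstep]
        dsimp only
        rw [if_neg hs]
        set F : Finset (Fin (Fintype.card A.Q)) :=
          Finset.univ.filter (fun j => fstep A (w (N + k)) (sigB A w (N + k) j) =
            fstep A (w (N + k)) (sigB A w (N + k) (I k))) with hF
        set j := F.min' ⟨I k, by simp [hF]⟩ with hj
        have hjF : j ∈ F := Finset.min'_mem _ _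
        have hjeq : fstep A (w (N + k)) (sigB A w (N + k) j) =
            fstep A (w (N + k)) (sigB A w (N + k) (I k)) :=
          (Finset.mem_filter.1 hjF).2
        have hjs : survive (fstep A (w (N + k))) (sigB A w (N + k)) j := by
          intro l hl hleq
          have hlF : l ∈ F := by
            rw [hF]
            exact Finset.mem_filter.2 ⟨Finset.mem_univ l, hleq.trans hjeq⟩
          exact absurd (Finset.min'_le F l hlF) (by omega)
        show sigmaStep (fstep A (w (N + k))) (sigB A w (N + k)) j = _
        rw [sigmaStep_survive _ _ _ hjs]
        show fstep A (w (N + k)) (sigB A w (N + k) j) = _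
        rw [hjeq, ih]
        rfl
  have P2 : ∀ k, (I (k + 1) : ℕ) ≤ I k ∧
      (¬ survive (fstep A (w (N + k))) (sigB A w (N + k)) (I k) → (I (k + 1) : ℕ) < I k) := by
    intro k
    rw [hIsucc k, hstep]
    dsimp only
    by_cases hs : survive (fstep A (w (N + k))) (sigB A w (N + k)) (I k)
    · rw [if_pos hs]
      exact ⟨le_rfl, fun hc => absurd hs hc⟩
    · rw [if_neg hs]
      have hlt : ((Finset.univ.filter (fun j => fstep A (w (N + k)) (sigB A w (N + k) j) =
          fstep A (w (N + k)) (sigB A w (N + k) (I k)))).min'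
          ⟨I k, by simp⟩ : ℕ) < I k := by
        unfold survive at hs
        push_neg at hs
        obtain ⟨l, hl, hleq⟩ := hs
        have hlF : l ∈ Finset.univ.filter (fun j => fstep A (w (N + k)) (sigB A w (N + k) j) =
            fstep A (w (N + k)) (sigB A w (N + k) (I k))) :=
          Finset.mem_filter.2 ⟨Finset.mem_univ l, hleq⟩
        have := Finset.min'_le _ l hlF
        have hlt' : (l : ℕ) < I k := hl
        exact lt_of_le_of_lt this hlt'
      exact ⟨le_of_lt hlt, fun _ => hlt⟩
  obtain ⟨K, hK⟩ := antitone_nat_stabilizes (fun k => (I k : ℕ)) (fun k => (P2 k).1)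
  have hIK : ∀ k, K ≤ k → I k = I K := fun k hk => Fin.ext (hK k hk)
  refine ⟨K, I K, ?_, P1 K⟩
  intro m hm
  obtain ⟨k, rfl⟩ := Nat.exists_eq_add_of_le hm
  have h1 : I (K + k) = I K := hIK _ (Nat.le_add_right _ _)
  by_contra hc
  have h2 := (P2 (K + k)).2
    (by rw [h1, show N + (K + k) = N + K + k from by omega]; exact hc)
  rw [h1] at h2
  have h3 : (I (K + k + 1) : ℕ) = I K := congrArg Fin.val (hIK (K + k + 1) (by omega))
  omega

theorem projAut_accepts_iff :
    (projAut A).Accepts w ↔ ∃ i : Fin (Fintype.card A.Q),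
      A.acc.eval (fun c => (projAut A).BoundedFrom (projAut A).init w (Sum.inl c, i)) ∧
      (projAut A).BoundedFrom (projAut A).init w (Sum.inr false, i) ∧
      ¬ (projAut A).BoundedFrom (projAut A).init w (Sum.inr true, i) := by
  show BC.eval _ (BC.bigOr ((List.finRange (Fintype.card A.Q)).map fun i =>
    .an (BC.map (fun c => (Sum.inl c, i)) A.acc)
      (.an (.atom (Sum.inr false, i)) (.nt (.atom (Sum.inr true, i)))))) ↔ _
  refine (BC.eval_bigOr _ _).trans ?_
  constructor
  · rintro ⟨φ, hφ, he⟩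
    obtain ⟨i, -, rfl⟩ := List.mem_map.1 hφ
    obtain ⟨h1, h2, h3⟩ := he
    exact ⟨i, (BC.eval_map (fun c => (Sum.inl c, i))
      ((projAut A).BoundedFrom (projAut A).init w) A.acc).1 h1, h2, h3⟩
  · rintro ⟨i, h1, h2, h3⟩
    refine ⟨_, List.mem_map.2 ⟨i, List.mem_finRange i, rfl⟩, ?_⟩
    exact ⟨(BC.eval_map (fun c => (Sum.inl c, i))
      ((projAut A).BoundedFrom (projAut A).init w) A.acc).2 h1, h2, h3⟩

theorem accepts_withSet_iff (X : Finset ℕ) (N : ℕ) (hX : ∀ x ∈ X, x < N) :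
    A.Accepts (withSet w X) ↔
      A.AcceptsFrom (A.runFrom A.init (withSet w X) N) (falseWord w N) := by
  show A.AcceptsFrom A.init (withSet w X) ↔ _
  rw [A.acceptsFrom_shift A.init (withSet w X) N, suffix_withSet_eq_falseWord w X N hX]

theorem acceptsFrom_falseWord_shift (q : A.Q) (N k : ℕ) :
    A.AcceptsFrom q (falseWord w N) ↔
      A.AcceptsFrom (A.runFrom q (falseWord w N) k) (falseWord w (N + k)) := by
  rw [A.acceptsFrom_shift q (falseWord w N) k, suffixFrom_falseWord]

theorem runFrom_withSet_eq (X : Finset ℕ) (N : ℕ) (hX : ∀ x ∈ X, x < N) (k : ℕ) :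
    A.runFrom A.init (withSet w X) (N + k) =
      A.runFrom (A.runFrom A.init (withSet w X) N) (falseWord w N) k := by
  rw [MaxAutomaton.runFrom_add, suffix_withSet_eq_falseWord w X N hX]

end Construction

end Aux

/-- Languages recognized by deterministic max-automata are
closed under weak existential (finite-set) quantification. -/
theorem maxAutomaton_weak_exists {α : Type} [Fintype α]
    (L : Set (ℕ → α × Bool))
    (h : ∃ A : MaxAutomaton (α × Bool), A.Lang = L) :
    ∃ B : MaxAutomaton α,
      B.Lang = { w : ℕ → α | ∃ X : Finset ℕ, withSet w X ∈ L } := by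
  obtain ⟨A, rfl⟩ := h
  refine ⟨projAut A, ?_⟩
  ext w
  show (projAut A).Accepts w ↔ ∃ X : Finset ℕ, A.Accepts (withSet w X)
  rw [projAut_accepts_iff]
  constructor
  · rintro ⟨i, hacc, hd, he⟩
    obtain ⟨M, hM⟩ := (bd_d A w i).1 hd
    obtain ⟨m, hm, hev⟩ := (bd_e A w i).1 he M
    obtain ⟨X, hXlt, hXrun⟩ := (memR A w m _).1 hev
    refine ⟨X, ?_⟩
    rw [accepts_withSet_iff A w X m hXlt, hXrun]
    obtain ⟨k, rfl⟩ := Nat.exists_eq_add_of_le hm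
    rw [(slotRun A w M i hM k).1, ← acceptsFrom_falseWord_shift A w (sigB A w M i) M k]
    exact (BC.eval_congr (fun c => bd_inl A w M i hM c) A.acc).1 hacc
  · rintro ⟨X, hAX⟩
    set N := X.sup id + 1 with hNdef
    have hX : ∀ x ∈ X, x < N := fun x hx =>
      Nat.lt_succ_of_le (Finset.le_sup (f := id) hx)
    set qN := A.runFrom A.init (withSet w X) N with hqN
    obtain ⟨K, i, hsurv, hsig⟩ := track A w N qN
    refine ⟨i, ?_, ?_, ?_⟩
    · have h1 : A.AcceptsFrom (sigB A w (N + K) i) (falseWord w (N + K)) := by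
        rw [hsig, ← acceptsFrom_falseWord_shift A w qN N K, hqN,
          ← accepts_withSet_iff A w X N hX]
        exact hAX
      exact (BC.eval_congr (fun c => bd_inl A w (N + K) i hsurv c) A.acc).2 h1
    · exact (bd_d A w i).2 ⟨N + K, hsurv⟩
    · rw [bd_e]
      intro N'
      set m := max N' (N + K) with hmdef
      have hm : N + K ≤ m := le_max_right _ _
      refine ⟨m, le_max_left _ _, ?_⟩
      obtain ⟨k, hk⟩ := Nat.exists_eq_add_of_le hm
      rw [hk]
      apply (memR A w _ _).2
      refine ⟨X, fun x hx => lt_of_lt_of_le (hX x hx) (by omega), ?_⟩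
      have e1 : sigB A w (N + K + k) i =
          A.runFrom (sigB A w (N + K) i) (falseWord w (N + K)) k :=
        (slotRun A w (N + K) i hsurv k).1
      have e2 : A.runFrom qN (falseWord w N) (K + k) =
          A.runFrom (A.runFrom qN (falseWord w N) K) (falseWord w (N + K)) k := by
        rw [MaxAutomaton.runFrom_add, suffixFrom_falseWord]
      rw [e1, hsig, show N + K + k = N + (K + k) from by omega,
        runFrom_withSet_eq A w X N hX (K + k), ← hqN]
      exact e2

end MaxReg
end

section
/- Let A be a deterministic max-automaton over Σ×{0,1} with state set Q. There exists a deterministic max-automaton over Σ with counters {c_q}_{q∈Q} such that after reading any finite prefix a₁⋯aₙ of its input, the value of counter c_q equals max(q, a₁⋯aₙ). -/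
namespace MaxReg

/-! ### Auxiliary material for Statement 11 -/

section Stmt11Aux

open Classical

section OpSem
variable {C : Type} [DecidableEq C]

lemma applyOps_cons_fst (op : CounterOp C) (l : List (CounterOp C)) (v : C → ℕ) :
    (applyOps (op :: l) v).1 = (applyOps l (applyOp v op).1).1 := rfl

lemma applyOps_append_fst (l₁ l₂ : List (CounterOp C)) (v : C → ℕ) :
    (applyOps (l₁ ++ l₂) v).1 = (applyOps l₂ (applyOps l₁ v).1).1 := by
  induction l₁ generalizing v with
  | nil => rfl
  | cons op l ih => simp [applyOps_cons_fst, ih]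

end OpSem

lemma foldr_max_init (x s : ℕ) (L : List ℕ) :
    L.foldr max (max x s) = max x (L.foldr max s) := by
  induction L with
  | nil => rfl
  | cons y L ih => simp [List.foldr_cons, ih, max_left_comm]

lemma le_foldr_max {L : List ℕ} {x : ℕ} (h : x ∈ L) (s : ℕ) : x ≤ L.foldr max s := by
  induction L with
  | nil => simp at h
  | cons y L ih =>
    rcases List.mem_cons.1 h with rfl | h
    · exact le_max_left _ _
    · exact (ih h).trans (le_max_right _ _)

lemma foldr_max_le {L : List ℕ} {m : ℕ} (h : ∀ x ∈ L, x ≤ m) :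
    L.foldr max 0 ≤ m := by
  induction L with
  | nil => simp
  | cons y L ih =>
    simp only [List.foldr_cons, max_le_iff]
    exact ⟨h y (by simp), ih fun x hx => h x (by simp [hx])⟩

variable {α : Type} (A : MaxAutomaton (α × Bool))

/-- Target state of a single transition. -/
noncomputable def tgt (p : A.Q) (a : α) (b : Bool) : A.Q := (A.δ p (a, b)).1

/-- Counters of the constructed automaton: main counters plus scratch counters. -/
abbrev Cnt : Type := A.Q ⊕ Option A.Q

noncomputable instance : DecidableEq (Cnt A) := Classical.decEq _

/-- Gadget realizing `c_{new q} := max (c_{new q}) (c_p + b)`. -/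
noncomputable def gadget (q p : A.Q) (b : Bool) : List (CounterOp (Cnt A)) :=
  if b then [.reset (.inr none), .maxOp (.inr none) (.inl p), .inc (.inr none),
      .maxOp (.inr (some q)) (.inr none)]
  else [.maxOp (.inr (some q)) (.inl p)]

lemma gadget_spec (q p : A.Q) (b : Bool) (v : Cnt A → ℕ) :
    (∀ r, (applyOps (gadget A q p b) v).1 (.inl r) = v (.inl r)) ∧
    (∀ q', q' ≠ q →
      (applyOps (gadget A q p b) v).1 (.inr (some q')) = v (.inr (some q'))) ∧
    (applyOps (gadget A q p b) v).1 (.inr (some q)) =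
      max (v (.inl p) + b.toNat) (v (.inr (some q))) := by
  cases b <;>
    exact ⟨fun r => by simp [gadget, applyOps, applyOp, Function.update_apply],
      fun q' hq' => by simp [gadget, applyOps, applyOp, Function.update_apply, hq'],
      by simp [gadget, applyOps, applyOp, Function.update_apply, max_comm]⟩

/-- Body of the block for `q`: accumulate the max over the listed pairs. -/
noncomputable def body (q : A.Q) : List (A.Q × Bool) → List (CounterOp (Cnt A))
  | [] => []
  | pb :: rest => gadget A q pb.1 pb.2 ++ body q rest

lemma body_spec (q : A.Q) (P : List (A.Q × Bool)) (v : Cnt A → ℕ) :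
    (∀ r, (applyOps (body A q P) v).1 (.inl r) = v (.inl r)) ∧
    (∀ q', q' ≠ q →
      (applyOps (body A q P) v).1 (.inr (some q')) = v (.inr (some q'))) ∧
    (applyOps (body A q P) v).1 (.inr (some q)) =
      (P.map (fun pb => v (.inl pb.1) + pb.2.toNat)).foldr max (v (.inr (some q))) := by
  induction P generalizing v with
  | nil => exact ⟨fun r => rfl, fun q' _ => rfl, rfl⟩
  | cons pb rest ih =>
    obtain ⟨g1, g2, g3⟩ := gadget_spec A q pb.1 pb.2 v
    set v₁ := (applyOps (gadget A q pb.1 pb.2) v).1 with hv₁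
    obtain ⟨i1, i2, i3⟩ := ih v₁
    have happ : ∀ c, (applyOps (body A q (pb :: rest)) v).1 c
        = (applyOps (body A q rest) v₁).1 c := by
      intro c; rw [body, applyOps_append_fst]
    refine ⟨fun r => ?_, fun q' hq' => ?_, ?_⟩
    · rw [happ, i1, g1]
    · rw [happ, i2 q' hq', g2 q' hq']
    · rw [happ, i3, g3]
      have hmap : rest.map (fun pb => v₁ (.inl pb.1) + pb.2.toNat)
          = rest.map (fun pb => v (.inl pb.1) + pb.2.toNat) :=
        List.map_congr_left fun pb _ => by rw [g1]
      rw [hmap, foldr_max_init]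
      rfl

/-- Block for `q`: reset the scratch target and take the max over the pairs. -/
noncomputable def block (q : A.Q) (P : List (A.Q × Bool)) : List (CounterOp (Cnt A)) :=
  .reset (.inr (some q)) :: body A q P

lemma block_spec (q : A.Q) (P : List (A.Q × Bool)) (v : Cnt A → ℕ) :
    (∀ r, (applyOps (block A q P) v).1 (.inl r) = v (.inl r)) ∧
    (∀ q', q' ≠ q →
      (applyOps (block A q P) v).1 (.inr (some q')) = v (.inr (some q'))) ∧
    (applyOps (block A q P) v).1 (.inr (some q)) =
      (P.map (fun pb => v (.inl pb.1) + pb.2.toNat)).foldr max 0 := by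
  have hv : ∀ c, (applyOps (block A q P) v).1 c
      = (applyOps (body A q P) (applyOp v (.reset (.inr (some q)))).1).1 c := by
    intro c; rw [block, applyOps_cons_fst]
  set v₀ := (applyOp v (.reset (.inr (some q)))).1 with hv₀
  have h0l : ∀ r, v₀ (Sum.inl r) = v (Sum.inl r) := by
    intro r; simp [hv₀, applyOp, Function.update_apply]
  have h0r : ∀ q', q' ≠ q → v₀ (Sum.inr (some q')) = v (Sum.inr (some q')) := by
    intro q' hq'; simp [hv₀, applyOp, Function.update_apply, hq']
  have h0q : v₀ (Sum.inr (some q)) = 0 := by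
    simp [hv₀, applyOp, Function.update_apply]
  obtain ⟨i1, i2, i3⟩ := body_spec A q P v₀
  refine ⟨fun r => ?_, fun q' hq' => ?_, ?_⟩
  · rw [hv, i1, h0l]
  · rw [hv, i2 q' hq', h0r q' hq']
  · rw [hv, i3, h0q]
    congr 1
    exact List.map_congr_left fun pb _ => by rw [h0l]

/-- Phase 1: compute all the new counter values into the scratch counters. -/
noncomputable def phase1 : List A.Q → (A.Q → List (A.Q × Bool)) → List (CounterOp (Cnt A))
  | [], _ => []
  | q :: qs, P => block A q (P q) ++ phase1 qs P

lemma phase1_spec (qs : List A.Q) (hnd : qs.Nodup) (P : A.Q → List (A.Q × Bool))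
    (v : Cnt A → ℕ) :
    (∀ r, (applyOps (phase1 A qs P) v).1 (.inl r) = v (.inl r)) ∧
    (∀ q ∈ qs, (applyOps (phase1 A qs P) v).1 (.inr (some q)) =
      ((P q).map (fun pb => v (.inl pb.1) + pb.2.toNat)).foldr max 0) ∧
    (∀ q, q ∉ qs → (applyOps (phase1 A qs P) v).1 (.inr (some q)) = v (.inr (some q))) := by
  induction qs generalizing v with
  | nil => exact ⟨fun r => rfl, by simp, fun q _ => rfl⟩
  | cons q qs ih =>
    obtain ⟨hq, hnd'⟩ := List.nodup_cons.1 hnd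
    obtain ⟨b1, b2, b3⟩ := block_spec A q (P q) v
    set v₁ := (applyOps (block A q (P q)) v).1 with hv₁
    obtain ⟨i1, i2, i3⟩ := ih hnd' v₁
    have happ : ∀ c, (applyOps (phase1 A (q :: qs) P) v).1 c
        = (applyOps (phase1 A qs P) v₁).1 c := by
      intro c; rw [phase1, applyOps_append_fst]
    refine ⟨fun r => ?_, fun q' hq' => ?_, fun q' hq' => ?_⟩
    · rw [happ, i1, b1]
    · rcases List.mem_cons.1 hq' with rfl | hmem
      · rw [happ, i3 q' hq, b3]
      · rw [happ, i2 q' hmem]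
        congr 1
        exact List.map_congr_left fun pb _ => by rw [b1]
    · have hq1 : q' ≠ q := fun h => hq' (h ▸ List.mem_cons_self)
      have hq2 : q' ∉ qs := fun h => hq' (List.mem_cons_of_mem _ h)
      rw [happ, i3 q' hq2, b2 q' hq1]

/-- Phase 2: copy the scratch counters back to the main counters. -/
noncomputable def phase2 : List A.Q → List (CounterOp (Cnt A))
  | [] => []
  | q :: qs => .reset (.inl q) :: .maxOp (.inl q) (.inr (some q)) :: phase2 qs

lemma phase2_spec (qs : List A.Q) (v : Cnt A → ℕ) :
    (∀ q ∈ qs, (applyOps (phase2 A qs) v).1 (.inl q) = v (.inr (some q))) ∧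
    (∀ q, q ∉ qs → (applyOps (phase2 A qs) v).1 (.inl q) = v (.inl q)) ∧
    (∀ x, (applyOps (phase2 A qs) v).1 (.inr x) = v (.inr x)) := by
  induction qs generalizing v with
  | nil => exact ⟨by simp, fun q _ => rfl, fun x => rfl⟩
  | cons q qs ih =>
    set v₁ := (applyOp ((applyOp v (.reset (.inl q))).1) (.maxOp (.inl q) (.inr (some q)))).1
      with hv₁
    have happ : ∀ c, (applyOps (phase2 A (q :: qs)) v).1 c
        = (applyOps (phase2 A qs) v₁).1 c := by
      intro c; rw [phase2, applyOps_cons_fst, applyOps_cons_fst]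
    have h1 : v₁ (Sum.inl q) = v (Sum.inr (some q)) := by
      simp [hv₁, applyOp, Function.update_apply]
    have h2 : ∀ q', q' ≠ q → v₁ (Sum.inl q') = v (Sum.inl q') := by
      intro q' hq'; simp [hv₁, applyOp, Function.update_apply, hq']
    have h3 : ∀ x, v₁ (Sum.inr x) = v (Sum.inr x) := by
      intro x; simp [hv₁, applyOp, Function.update_apply]
    obtain ⟨i1, i2, i3⟩ := ih v₁
    refine ⟨fun q' hq' => ?_, fun q' hq' => ?_, fun x => ?_⟩
    · rcases List.mem_cons.1 hq' with rfl | hmem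
      · by_cases hmem : q' ∈ qs
        · rw [happ, i1 q' hmem, h3]
        · rw [happ, i2 q' hmem, h1]
      · rw [happ, i1 q' hmem, h3]
    · have hq1 : q' ≠ q := fun h => hq' (h ▸ List.mem_cons_self)
      have hq2 : q' ∉ qs := fun h => hq' (List.mem_cons_of_mem _ h)
      rw [happ, i2 q' hq2, h2 q' hq1]
    · rw [happ, i3, h3]


/-! #### The constructed automaton -/

noncomputable def pairsL (R : Finset A.Q) (a : α) (q : A.Q) : List (A.Q × Bool) :=
  (Finset.univ : Finset (A.Q × Bool)).toList.filter
    (fun pb => decide (pb.1 ∈ R ∧ tgt A pb.1 a pb.2 = q))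

lemma mem_pairsL {R : Finset A.Q} {a : α} {q : A.Q} {pb : A.Q × Bool} :
    pb ∈ pairsL A R a q ↔ pb.1 ∈ R ∧ tgt A pb.1 a pb.2 = q := by
  simp [pairsL, List.mem_filter, Finset.mem_toList]

noncomputable def Rnext (R : Finset A.Q) (a : α) : Finset A.Q :=
  Finset.univ.filter (fun q => ∃ p ∈ R, ∃ b, tgt A p a b = q)

noncomputable def fullOps (R : Finset A.Q) (a : α) : List (CounterOp (Cnt A)) :=
  phase1 A (Finset.univ.toList) (pairsL A R a) ++ phase2 A (Finset.univ.toList)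

lemma fullOps_spec (R : Finset A.Q) (a : α) (v : Cnt A → ℕ) (q : A.Q) :
    (applyOps (fullOps A R a) v).1 (.inl q) =
      ((pairsL A R a q).map (fun pb => v (.inl pb.1) + pb.2.toNat)).foldr max 0 := by
  obtain ⟨p1, p2, p3⟩ := phase1_spec A _ (Finset.univ.nodup_toList) (pairsL A R a) v
  set v₁ := (applyOps (phase1 A (Finset.univ.toList) (pairsL A R a)) v).1 with hv₁
  obtain ⟨s1, s2, s3⟩ := phase2_spec A (Finset.univ.toList) v₁
  have hmemq : q ∈ (Finset.univ : Finset A.Q).toList := by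
    simp [Finset.mem_toList]
  rw [fullOps, applyOps_append_fst, ← hv₁, s1 q hmemq, p2 q hmemq]

/-! #### Semantics of `maxReach` -/

lemma readConfig_append {β : Type} (B : MaxAutomaton β) (u : List β) (c : β) :
    B.readConfig (u ++ [c]) = B.stepList (B.readConfig u) c := by
  unfold MaxAutomaton.readConfig
  rw [List.foldl_append]
  rfl

lemma encodeList_congr {β : Type} {l : List β} {X Y : Finset ℕ}
    (h : ∀ i < l.length, (i ∈ X ↔ i ∈ Y)) : encodeList l X = encodeList l Y := by
  unfold encodeList
  refine List.map_congr_left fun p hp => ?_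
  have hlt : p.2 < l.length := by simpa using List.snd_lt_of_mem_zipIdx hp
  have hd : (decide (p.2 ∈ X)) = (decide (p.2 ∈ Y)) := decide_eq_decide.2 (h p.2 hlt)
  rw [hd]

lemma encodeList_append {β : Type} (l : List β) (a : β) (X : Finset ℕ) :
    encodeList (l ++ [a]) X = encodeList l X ++ [(a, decide (l.length ∈ X))] := by
  unfold encodeList
  rw [List.zipIdx_append]
  simp [List.zipIdx_singleton]

def SSet (q : A.Q) (l : List α) : Set ℕ :=
  {k | ∃ X : Finset ℕ, (∀ x ∈ X, x < l.length) ∧ X.card = k ∧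
    (A.readConfig (encodeList l X)).1 = q}

lemma maxReach_eq (q : A.Q) (l : List α) : maxReach A q l = sSup (SSet A q l) := rfl

lemma SSet_le {q : A.Q} {l : List α} {k : ℕ} (h : k ∈ SSet A q l) : k ≤ l.length := by
  obtain ⟨X, hX, rfl, -⟩ := h
  have hsub : X ⊆ Finset.range l.length := fun x hx => Finset.mem_range.2 (hX x hx)
  simpa using Finset.card_le_card hsub

lemma bddAbove_SSet (q : A.Q) (l : List α) : BddAbove (SSet A q l) :=
  ⟨l.length, fun _ hk => SSet_le A hk⟩

lemma le_maxReach {q : A.Q} {l : List α} {k : ℕ} (h : k ∈ SSet A q l) :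
    k ≤ maxReach A q l :=
  le_csSup (bddAbove_SSet A q l) h

lemma maxReach_mem {q : A.Q} {l : List α} (h : (SSet A q l).Nonempty) :
    maxReach A q l ∈ SSet A q l :=
  Nat.sSup_mem h (bddAbove_SSet A q l)

lemma maxReach_empty {q : A.Q} {l : List α} (h : ¬ (SSet A q l).Nonempty) :
    maxReach A q l = 0 := by
  rw [maxReach_eq, Set.not_nonempty_iff_eq_empty.1 h]
  exact csSup_empty

def Reachable (q : A.Q) (l : List α) : Prop :=
  ∃ X : Finset ℕ, (∀ x ∈ X, x < l.length) ∧ (A.readConfig (encodeList l X)).1 = q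

lemma reachable_iff (q : A.Q) (l : List α) :
    Reachable A q l ↔ (SSet A q l).Nonempty :=
  ⟨fun ⟨X, h1, h2⟩ => ⟨X.card, X, h1, rfl, h2⟩,
   fun ⟨_, X, h1, _, h2⟩ => ⟨X, h1, h2⟩⟩

lemma maxReach_nil (q : A.Q) : maxReach A q [] = 0 := by
  by_cases h : (SSet A q []).Nonempty
  · have := SSet_le A (maxReach_mem A h)
    simpa using this
  · exact maxReach_empty A h

lemma readConfig_nil : A.readConfig [] = (A.init, fun _ => 0) := rfl

lemma encodeList_nil (X : Finset ℕ) : encodeList ([] : List α) X = [] := by simp [encodeList]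

lemma reachable_nil (q : A.Q) : Reachable A q [] ↔ q = A.init := by
  constructor
  · rintro ⟨X, -, h2⟩
    rw [encodeList_nil, readConfig_nil] at h2
    exact h2.symm
  · rintro rfl
    exact ⟨∅, by simp, by rw [encodeList_nil, readConfig_nil]⟩

lemma decompose {q : A.Q} {l : List α} {a : α} {X : Finset ℕ}
    (hX : ∀ x ∈ X, x < (l ++ [a]).length)
    (hq : (A.readConfig (encodeList (l ++ [a]) X)).1 = q) :
    ∃ (X' : Finset ℕ) (b : Bool), (∀ x ∈ X', x < l.length) ∧
      X.card = X'.card + b.toNat ∧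
      tgt A (A.readConfig (encodeList l X')).1 a b = q := by
  classical
  set n := l.length with hn
  have hlen : (l ++ [a]).length = n + 1 := by simp [hn]
  set X' := X.filter (· < n) with hX'def
  set b := decide (n ∈ X) with hb
  have hX' : ∀ x ∈ X', x < n := fun x hx => by
    have := Finset.mem_filter.1 hx
    simpa using this.2
  have henc : encodeList l X = encodeList l X' :=
    encodeList_congr fun i hi => by
      simp [hX'def, Finset.mem_filter, hi, hn]
  have hnX' : n ∉ X' := fun h => lt_irrefl n (hX' n h)
  have hcard : X.card = X'.card + b.toNat := by
    by_cases hmem : n ∈ X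
    · have hXeq : X = insert n X' := by
        ext i
        simp only [Finset.mem_insert, hX'def, Finset.mem_filter]
        constructor
        · intro hi
          have : i < n + 1 := hlen ▸ hX i hi
          rcases Nat.lt_succ_iff_lt_or_eq.1 this with h | h
          · exact Or.inr ⟨hi, h⟩
          · exact Or.inl h
        · rintro (rfl | ⟨hi, -⟩)
          · exact hmem
          · exact hi
      rw [hXeq, Finset.card_insert_of_notMem hnX', hb]
      simp [hmem]
    · have hXeq : X = X' := by
        ext i
        simp only [hX'def, Finset.mem_filter]
        constructor
        · intro hi
          refine ⟨hi, ?_⟩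
          have : i < n + 1 := hlen ▸ hX i hi
          rcases Nat.lt_succ_iff_lt_or_eq.1 this with h | h
          · exact h
          · exact absurd (h ▸ hi) hmem
        · exact fun h => h.1
      rw [← hXeq, hb]
      simp [hmem]
  refine ⟨X', b, hX', hcard, ?_⟩
  rw [encodeList_append, henc, readConfig_append] at hq
  exact hq

lemma compose {p : A.Q} {l : List α} {X' : Finset ℕ}
    (hX' : ∀ x ∈ X', x < l.length)
    (hp : (A.readConfig (encodeList l X')).1 = p) (a : α) (b : Bool) :
    ∃ X : Finset ℕ, (∀ x ∈ X, x < (l ++ [a]).length) ∧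
      X.card = X'.card + b.toNat ∧
      (A.readConfig (encodeList (l ++ [a]) X)).1 = tgt A p a b := by
  classical
  have hnX' : l.length ∉ X' := fun h => lt_irrefl l.length (hX' _ h)
  have hlen : (l ++ [a]).length = l.length + 1 := by simp
  cases b with
  | false =>
    refine ⟨X', fun x hx => ?_, by simp, ?_⟩
    · rw [hlen]; exact (hX' x hx).trans (Nat.lt_succ_self _)
    · have hbit : decide (l.length ∈ X') = false := by simp [hnX']
      rw [encodeList_append, hbit, readConfig_append]
      show (A.δ (A.readConfig (encodeList l X')).1 (a, false)).1 = tgt A p a false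
      rw [hp]
      rfl
  | true =>
    refine ⟨insert l.length X', fun x hx => ?_, ?_, ?_⟩
    · rw [hlen]
      rcases Finset.mem_insert.1 hx with rfl | hx
      · exact Nat.lt_succ_self _
      · exact (hX' x hx).trans (Nat.lt_succ_self _)
    · simp [Finset.card_insert_of_notMem hnX']
    · have hbit : decide (l.length ∈ insert l.length X') = true := by simp
      have hagree : encodeList l (insert l.length X') = encodeList l X' :=
        encodeList_congr fun i hi => by
          simp only [Finset.mem_insert]
          exact ⟨fun h => h.elim (fun h => absurd (h ▸ hi) (lt_irrefl _)) id, Or.inr⟩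
      rw [encodeList_append, hagree, hbit, readConfig_append]
      show (A.δ (A.readConfig (encodeList l X')).1 (a, true)).1 = tgt A p a true
      rw [hp]
      rfl

/-- The finset of states reachable after reading `l` (with some annotation). -/
noncomputable def RFin (l : List α) : Finset A.Q :=
  Finset.univ.filter (fun p => Reachable A p l)

lemma mem_RFin {q : A.Q} {l : List α} : q ∈ RFin A l ↔ Reachable A q l := by
  simp [RFin]

lemma RFin_nil : RFin A [] = {A.init} := by
  ext q
  simp [mem_RFin, reachable_nil]

lemma RFin_append (l : List α) (a : α) : RFin A (l ++ [a]) = Rnext A (RFin A l) a := by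
  ext q
  simp only [mem_RFin, Rnext, Finset.mem_filter, Finset.mem_univ, true_and]
  constructor
  · rintro ⟨X, hX, hq⟩
    obtain ⟨X', b, hX', -, htgt⟩ := decompose A hX hq
    exact ⟨_, ⟨X', hX', rfl⟩, b, htgt⟩
  · rintro ⟨p, hp, b, htgt⟩
    obtain ⟨X', hX', hpr⟩ := hp
    obtain ⟨X, hX, -, hq⟩ := compose A hX' hpr a b
    exact ⟨X, hX, htgt ▸ hq⟩

lemma maxReach_append (l : List α) (a : α) (q : A.Q) :
    maxReach A q (l ++ [a]) =
      ((pairsL A (RFin A l) a q).map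
        (fun pb => maxReach A pb.1 l + pb.2.toNat)).foldr max 0 := by
  apply le_antisymm
  · by_cases h : (SSet A q (l ++ [a])).Nonempty
    · obtain ⟨X, hX, hcard, hstate⟩ := maxReach_mem A h
      obtain ⟨X', b, hX', hcard', htgt⟩ := decompose A hX hstate
      have hp : (X'.card) ∈ SSet A (A.readConfig (encodeList l X')).1 l :=
        ⟨X', hX', rfl, rfl⟩
      have hmem : ((A.readConfig (encodeList l X')).1, b) ∈ pairsL A (RFin A l) a q :=
        (mem_pairsL A).2 ⟨(mem_RFin A).2 ⟨X', hX', rfl⟩, htgt⟩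
      calc maxReach A q (l ++ [a]) = X.card := hcard.symm
        _ = X'.card + b.toNat := hcard'
        _ ≤ maxReach A (A.readConfig (encodeList l X')).1 l + b.toNat :=
            Nat.add_le_add_right (le_maxReach A hp) _
        _ ≤ _ := le_foldr_max (List.mem_map_of_mem (f := fun pb : A.Q × Bool => maxReach A pb.1 l + pb.2.toNat) hmem) 0
    · rw [maxReach_empty A h]
      exact Nat.zero_le _
  · apply foldr_max_le
    intro x hx
    obtain ⟨pb, hpb, rfl⟩ := List.mem_map.1 hx
    obtain ⟨hpR, htgt⟩ := (mem_pairsL A).1 hpb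
    have hne : (SSet A pb.1 l).Nonempty := (reachable_iff A pb.1 l).1 ((mem_RFin A).1 hpR)
    obtain ⟨X', hX', hcard', hstate'⟩ := maxReach_mem A hne
    obtain ⟨X, hX, hcard, hstate⟩ := compose A hX' hstate' a pb.2
    have : X.card ∈ SSet A q (l ++ [a]) := ⟨X, hX, rfl, htgt ▸ hstate⟩
    have hle := le_maxReach A this
    rwa [hcard, hcard'] at hle

/-- The constructed max-automaton. -/
noncomputable def Bld : MaxAutomaton α where
  Q := Finset A.Q
  C := Cnt A
  init := {A.init}
  δ := fun R a => (Rnext A R a, fullOps A R a)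
  acc := .tt

lemma Bld_invariant (l : List α) :
    ((Bld A).readConfig l).1 = RFin A l ∧
    ∀ q : A.Q, ((Bld A).readConfig l).2 (Sum.inl q) = maxReach A q l := by
  induction l using List.reverseRecOn with
  | nil =>
    refine ⟨?_, fun q => ?_⟩
    · rw [RFin_nil]; rfl
    · rw [maxReach_nil]; rfl
  | append_singleton l a ih =>
    obtain ⟨ih1, ih2⟩ := ih
    rw [readConfig_append]
    refine ⟨?_, fun q => ?_⟩
    · show Rnext A ((Bld A).readConfig l).1 a = _
      rw [ih1, RFin_append]
    · show (applyOps (fullOps A ((Bld A).readConfig l).1 a)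
        ((Bld A).readConfig l).2).1 (Sum.inl q) = _
      refine (fullOps_spec A _ a _ q).trans ?_
      rw [ih1, maxReach_append]
      congr 1
      exact List.map_congr_left fun pb _ => by rw [ih2]

end Stmt11Aux


/-- There is a deterministic max-automaton with counters
`{c_q}_{q ∈ Q}` computing, after each finite prefix `a₁⋯aₙ`, the values
`max(q, a₁⋯aₙ)`. -/
theorem exists_maxReach_automaton {α : Type} [Fintype α]
    (A : MaxAutomaton (α × Bool)) :
    ∃ (B : MaxAutomaton α) (ι : A.Q → B.C), Function.Injective ι ∧
      ∀ (l : List α) (q : A.Q),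
        (B.readConfig l).2 (ι q) = maxReach A q l := by
  exact ⟨Bld A, Sum.inl, Sum.inl_injective, fun l q => (Bld_invariant A l).2 q⟩

end MaxReg
end

section
/- Let A be a deterministic max-automaton over Σ×{0,1} recognizing L. A word a₁a₂⋯ ∈ Σ^ω belongs to UL if and only if there is a state q of A such that the set of values { max(q, a₁⋯aₙ) : n ∈ ℕ such that the word (a_{n+1}a_{n+2}⋯)[∅] ∈ (Σ×{0,1})^ω is accepted by A when started in state q } is unbounded. -/
namespace MaxReg

def Rel (K : ℕ) {C : Type} (u v : C → ℕ) : Prop := ∀ c, u c ≤ v c ∧ v c ≤ u c + K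

lemma rel_applyOps {C : Type} [DecidableEq C] (K : ℕ) :
    ∀ (ops : List (CounterOp C)) (u v : C → ℕ), Rel K u v →
    Rel K (applyOps ops u).1 (applyOps ops v).1 ∧
    (∀ p ∈ (applyOps ops u).2, ∃ r ∈ (applyOps ops v).2,
      r.1 = p.1 ∧ p.2 ≤ r.2 ∧ r.2 ≤ p.2 + K) ∧
    (∀ r ∈ (applyOps ops v).2, ∃ p ∈ (applyOps ops u).2,
      p.1 = r.1 ∧ p.2 ≤ r.2 ∧ r.2 ≤ p.2 + K)
  | [], u, v, h => ⟨h, by simp [applyOps], by simp [applyOps]⟩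
  | op :: ops, u, v, h => by
    have hstep : Rel K (applyOp u op).1 (applyOp v op).1 := by
      cases op with
      | inc c =>
          intro c'
          by_cases hc : c' = c <;>
            simp [applyOp, Function.update, hc] <;> rcases h c with ⟨h1, h2⟩ <;> try omega
          exact h c'
      | reset c =>
          intro c'
          by_cases hc : c' = c <;> simp [applyOp, Function.update, hc]
          exact h c'
      | output c => exact h
      | maxOp c d =>
          intro c'
          simp only [applyOp]
          by_cases hc : c' = c
          · subst hc
            simp only [Function.update_self]
            exact ⟨max_le_max (h _).1 (h d).1,
              max_le ((h _).2.trans (add_le_add_left (le_max_left _ _) K))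
                ((h d).2.trans (add_le_add_left (le_max_right _ _) K))⟩
          · simp only [Function.update_of_ne hc]
            exact h c'
    obtain ⟨ih1, ih2, ih3⟩ := rel_applyOps K ops _ _ hstep
    refine ⟨ih1, ?_, ?_⟩
    · intro p hp
      simp only [applyOps, List.mem_append] at hp ⊢
      rcases hp with hp | hp
      · cases op with
        | output c =>
            simp [applyOp] at hp
            subst hp
            exact ⟨(c, v c), Or.inl (by simp [applyOp]), rfl, (h c).1, (h c).2⟩
        | inc c => simp [applyOp] at hp
        | reset c => simp [applyOp] at hp
        | maxOp c d => simp [applyOp] at hp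
      · obtain ⟨r, hr, hrel⟩ := ih2 p hp
        exact ⟨r, Or.inr hr, hrel⟩
    · intro r hr
      simp only [applyOps, List.mem_append] at hr ⊢
      rcases hr with hr | hr
      · cases op with
        | output c =>
            simp [applyOp] at hr
            subst hr
            exact ⟨(c, u c), Or.inl (by simp [applyOp]), rfl, (h c).1, (h c).2⟩
        | inc c => simp [applyOp] at hr
        | reset c => simp [applyOp] at hr
        | maxOp c d => simp [applyOp] at hr
      · obtain ⟨p, hp, hrel⟩ := ih3 r hr
        exact ⟨p, Or.inr hp, hrel⟩


section Helpers

lemma readConfig_range {β : Type} (A : MaxAutomaton β) (u : ℕ → β) (n : ℕ) :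
    A.readConfig ((List.range n).map u) = (A.runFrom A.init u n, A.valsFrom A.init u n) := by
  induction n with
  | zero => simp [MaxAutomaton.readConfig, MaxAutomaton.runFrom, MaxAutomaton.valsFrom]
  | succ n ih =>
      rw [List.range_succ, List.map_append]
      simp only [MaxAutomaton.readConfig] at ih ⊢
      rw [List.foldl_append, ih]
      simp [MaxAutomaton.stepList, MaxAutomaton.runFrom, MaxAutomaton.valsFrom]

lemma encodeList_prefix {α : Type} (w : ℕ → α) (X : Finset ℕ) (n : ℕ) :
    encodeList (prefixList w n) X = (List.range n).map (withSet w X) := by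
  induction n with
  | zero => simp [encodeList, prefixList]
  | succ n ih =>
      have hlen : (prefixList w n).length = n := by simp [prefixList]
      have h1 : prefixList w (n + 1) = prefixList w n ++ [w n] := by
        simp [prefixList, List.range_succ]
      rw [h1, List.range_succ, List.map_append, ← ih]
      simp [encodeList, List.zipIdx_append, hlen, withSet]

lemma withSet_shift {α : Type} (w : ℕ → α) (X : Finset ℕ) {n : ℕ}
    (hX : ∀ x ∈ X, x < n) (k : ℕ) :
    withSet w X (n + k) = withSet (suffixFrom w n) (∅ : Finset ℕ) k := by
  have h1 : decide (n + k ∈ X) = false :=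
    decide_eq_false fun h => by have := hX _ h; omega
  have h2 : decide (k ∈ (∅ : Finset ℕ)) = false :=
    decide_eq_false (Finset.notMem_empty k)
  simp [withSet, suffixFrom, h1, h2]

lemma key_run {α : Type} (A : MaxAutomaton (α × Bool)) (w : ℕ → α) (X : Finset ℕ)
    {n : ℕ} (hX : ∀ x ∈ X, x < n) (K : ℕ)
    (hK : ∀ c, A.valsFrom A.init (withSet w X) n c ≤ K) (k : ℕ) :
    A.runFrom A.init (withSet w X) (n + k) =
      A.runFrom (A.runFrom A.init (withSet w X) n) (withSet (suffixFrom w n) ∅) k ∧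
    Rel K (A.valsFrom (A.runFrom A.init (withSet w X) n) (withSet (suffixFrom w n) ∅) k)
      (A.valsFrom A.init (withSet w X) (n + k)) := by
  set u := withSet w X with hu
  set s := withSet (suffixFrom w n) (∅ : Finset ℕ) with hs
  set q := A.runFrom A.init u n with hq
  induction k with
  | zero =>
      refine ⟨rfl, fun c => ⟨Nat.zero_le _, ?_⟩⟩
      simpa [MaxAutomaton.valsFrom] using hK c
  | succ k ih =>
      have hlet : u (n + k) = s k := withSet_shift w X hX k
      have hadd : n + (k + 1) = (n + k) + 1 := rfl
      constructor
      · rw [hadd]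
        show (A.δ (A.runFrom A.init u (n + k)) (u (n + k))).1
            = (A.δ (A.runFrom q s k) (s k)).1
        rw [ih.1, hlet]
      · rw [hadd]
        show Rel K (applyOps (A.δ (A.runFrom q s k) (s k)).2 (A.valsFrom q s k)).1
          (applyOps (A.δ (A.runFrom A.init u (n + k)) (u (n + k))).2
            (A.valsFrom A.init u (n + k))).1
        rw [ih.1, hlet]
        exact (rel_applyOps K _ _ _ ih.2).1

lemma key_outs {α : Type} (A : MaxAutomaton (α × Bool)) (w : ℕ → α) (X : Finset ℕ)
    {n : ℕ} (hX : ∀ x ∈ X, x < n) (K : ℕ)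
    (hK : ∀ c, A.valsFrom A.init (withSet w X) n c ≤ K) (k : ℕ) :
    (∀ p ∈ A.outsFrom (A.runFrom A.init (withSet w X) n) (withSet (suffixFrom w n) ∅) k,
      ∃ r ∈ A.outsFrom A.init (withSet w X) (n + k),
        r.1 = p.1 ∧ p.2 ≤ r.2 ∧ r.2 ≤ p.2 + K) ∧
    (∀ r ∈ A.outsFrom A.init (withSet w X) (n + k),
      ∃ p ∈ A.outsFrom (A.runFrom A.init (withSet w X) n) (withSet (suffixFrom w n) ∅) k,
        p.1 = r.1 ∧ p.2 ≤ r.2 ∧ r.2 ≤ p.2 + K) := by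
  obtain ⟨h1, h2⟩ := key_run A w X hX K hK k
  have hlet : withSet w X (n + k) = withSet (suffixFrom w n) (∅ : Finset ℕ) k :=
    withSet_shift w X hX k
  simp only [MaxAutomaton.outsFrom, h1, hlet]
  exact ⟨(rel_applyOps K _ _ _ h2).2.1, (rel_applyOps K _ _ _ h2).2.2⟩

lemma outs_prefix_bound {β : Type} (A : MaxAutomaton β) (q0 : A.Q) (u : ℕ → β) (n : ℕ) :
    ∃ B0 : ℕ, ∀ j < n, ∀ p ∈ A.outsFrom q0 u j, p.2 ≤ B0 := by
  induction n with
  | zero => exact ⟨0, fun j hj => absurd hj (by omega)⟩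
  | succ n ih =>
      obtain ⟨B0, hB0⟩ := ih
      refine ⟨max B0 (((A.outsFrom q0 u n).map Prod.snd).sum), fun j hj p hp => ?_⟩
      rcases Nat.lt_succ_iff_lt_or_eq.mp hj with h | rfl
      · exact le_trans (hB0 j h p hp) (le_max_left _ _)
      · exact le_trans (List.single_le_sum (fun x _ => Nat.zero_le x) _
          (List.mem_map_of_mem (f := Prod.snd) hp)) (le_max_right _ _)

lemma evalCongr {σ : Type} {f g : σ → Prop} (h : ∀ a, f a ↔ g a) :
    ∀ φ : BC σ, BC.eval f φ ↔ BC.eval g φ := by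
  intro φ; induction φ <;> simp [BC.eval, *]

lemma bounded_iff {α : Type} (A : MaxAutomaton (α × Bool)) (w : ℕ → α) (X : Finset ℕ)
    {n : ℕ} (hX : ∀ x ∈ X, x < n) (c : A.C) :
    A.BoundedFrom A.init (withSet w X) c ↔
      A.BoundedFrom (A.runFrom A.init (withSet w X) n) (withSet (suffixFrom w n) ∅) c := by
  classical
  set K := Finset.univ.sup (A.valsFrom A.init (withSet w X) n) with hKdef
  have hK : ∀ c', A.valsFrom A.init (withSet w X) n c' ≤ K :=
    fun c' => Finset.le_sup (Finset.mem_univ c')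
  constructor
  · rintro ⟨B, hB⟩
    refine ⟨B, fun k p hp hc => ?_⟩
    obtain ⟨r, hr, hr1, hr2, _⟩ := (key_outs A w X hX K hK k).1 p hp
    exact le_trans hr2 (hB (n + k) r hr (by rw [hr1, hc]))
  · rintro ⟨B, hB⟩
    obtain ⟨B0, hB0⟩ := outs_prefix_bound A A.init (withSet w X) n
    refine ⟨max B0 (B + K), fun j p hp hc => ?_⟩
    rcases lt_or_ge j n with h | h
    · exact le_trans (hB0 j h p hp) (le_max_left _ _)
    · obtain ⟨k, rfl⟩ := Nat.exists_eq_add_of_le h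
      obtain ⟨p', hp', hp1, _, hp3⟩ := (key_outs A w X hX K hK k).2 p hp
      have : p.2 ≤ B + K :=
        le_trans hp3 (add_le_add_left (hB k p' hp' (by rw [hp1, hc])) K)
      exact le_trans this (le_max_right _ _)

lemma accepts_iff {α : Type} (A : MaxAutomaton (α × Bool)) (w : ℕ → α) (X : Finset ℕ)
    {n : ℕ} (hX : ∀ x ∈ X, x < n) :
    A.Accepts (withSet w X) ↔
      A.AcceptsFrom (A.runFrom A.init (withSet w X) n) (withSet (suffixFrom w n) ∅) :=
  evalCongr (fun c => bounded_iff A w X hX c) A.acc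

lemma exists_freq {Q : Type} [Finite Q] (f : ℕ → Q) :
    ∃ q, ∀ m, ∃ m', m ≤ m' ∧ f m' = q := by
  obtain ⟨q, hq⟩ := Finite.exists_infinite_fiber f
  rw [Set.infinite_coe_iff] at hq
  refine ⟨q, fun m => ?_⟩
  obtain ⟨b, hb, hmb⟩ := hq.exists_gt m
  exact ⟨b, le_of_lt hmb, hb⟩

end Helpers

/-- A word `a₁a₂⋯` belongs to `UL` iff for some state `q` the
values `max(q, a₁⋯aₙ)`, over those `n` for which the suffix
`(a_{n+1}a_{n+2}⋯)[∅]` is accepted by `A` started in `q`, are unbounded. -/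
theorem mem_UL_iff_maxReach_unbounded {α : Type} [Fintype α]
    (A : MaxAutomaton (α × Bool)) (w : ℕ → α) :
    w ∈ UL A.Lang ↔
      ∃ q : A.Q, ∀ m : ℕ, ∃ n : ℕ,
        A.AcceptsFrom q (withSet (suffixFrom w n) (∅ : Finset ℕ)) ∧
        m ≤ maxReach A q (prefixList w n) := by
  classical
  constructor
  · intro hw
    simp only [UL, Set.mem_setOf_eq] at hw
    choose X hcard hmem using hw
    set nn : ℕ → ℕ := fun m => (X m).sup id + 1 with hnn
    have hXlt : ∀ m, ∀ x ∈ X m, x < nn m :=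
      fun m x hx => Nat.lt_succ_of_le (Finset.le_sup (f := id) hx)
    obtain ⟨q, hq⟩ := exists_freq (fun m => A.runFrom A.init (withSet w (X m)) (nn m))
    refine ⟨q, fun m => ?_⟩
    obtain ⟨m', hm', hqm⟩ := hq m
    refine ⟨nn m', ?_, ?_⟩
    · rw [← hqm]
      exact (accepts_iff A w (X m') (hXlt m')).mp (hmem m')
    · have hlen : (prefixList w (nn m')).length = nn m' := by simp [prefixList]
      have hmemS : (X m').card ∈ {k | ∃ Y : Finset ℕ,
          (∀ x ∈ Y, x < (prefixList w (nn m')).length) ∧ Y.card = k ∧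
          (A.readConfig (encodeList (prefixList w (nn m')) Y)).1 = q} := by
        refine ⟨X m', by rw [hlen]; exact hXlt m', rfl, ?_⟩
        rw [encodeList_prefix, readConfig_range]
        exact hqm
      have hbdd : BddAbove {k | ∃ Y : Finset ℕ,
          (∀ x ∈ Y, x < (prefixList w (nn m')).length) ∧ Y.card = k ∧
          (A.readConfig (encodeList (prefixList w (nn m')) Y)).1 = q} := by
        refine ⟨nn m', ?_⟩
        rintro k ⟨Y, hY, rfl, -⟩
        calc Y.card ≤ (Finset.range (nn m')).card :=
              Finset.card_le_card fun x hx => Finset.mem_range.mpr (hlen ▸ hY x hx)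
          _ = nn m' := Finset.card_range _
      calc m ≤ m' := hm'
        _ ≤ (X m').card := hcard m'
        _ ≤ maxReach A q (prefixList w (nn m')) := le_csSup hbdd hmemS
  · rintro ⟨q, H⟩
    intro m
    obtain ⟨n, hacc, hm⟩ := H (m + 1)
    have hlen : (prefixList w n).length = n := by simp [prefixList]
    set S := {k | ∃ Y : Finset ℕ, (∀ x ∈ Y, x < (prefixList w n).length) ∧
        Y.card = k ∧ (A.readConfig (encodeList (prefixList w n) Y)).1 = q} with hS
    have hm' : m + 1 ≤ sSup S := hm
    have hbdd : BddAbove S := by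
      refine ⟨n, ?_⟩
      rintro k ⟨Y, hY, rfl, -⟩
      calc Y.card ≤ (Finset.range n).card :=
            Finset.card_le_card fun x hx => Finset.mem_range.mpr (hlen ▸ hY x hx)
        _ = n := Finset.card_range _
    have hne : S.Nonempty := by
      by_contra h
      rw [Set.not_nonempty_iff_eq_empty] at h
      rw [h, csSup_empty] at hm'
      simp at hm'
    obtain ⟨Y, hY, hcard, hq'⟩ := Nat.sSup_mem hne hbdd
    have hYlt : ∀ x ∈ Y, x < n := fun x hx => hlen ▸ hY x hx
    have hqr : A.runFrom A.init (withSet w Y) n = q := by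
      rw [encodeList_prefix, readConfig_range] at hq'
      exact hq'
    refine ⟨Y, by omega, ?_⟩
    show A.Accepts (withSet w Y)
    rw [accepts_iff A w Y hYlt, hqr]
    exact hacc


end MaxReg
end
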